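/- arXiv:2505.07588 — 3 statements merged into one kernel-verified Lean document; each statement's English description precedes it below -/
import Mathlib

section
/- A connected pruned graph G satisfies cat(G) = 2 if and only if G is isomorphic to C_3, P_3, or P_4. -/
open SimpleGraph

universe u

/-- The cat can move from `u` to `w` in `G`: there is a nontrivial path,
equivalently `w ≠ u` and `w` is reachable from `u`. -/
def CatMove {V : Type u} (G : SimpleGraph V) (u w : V) : Prop :=
  u ≠ w ∧ G.Reachable u w

/-- `CapturedIn G v n` : with the cat on `v` and the herder to cut next,
the herder can guarantee that the cat is isolated after at most `n` edge deletions. -/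
inductive CapturedIn {V : Type u} : SimpleGraph V → V → ℕ → Prop
  | isolated {G : SimpleGraph V} {v : V} {n : ℕ} (h : ∀ w, ¬ G.Adj v w) :
      CapturedIn G v n
  | cut {G : SimpleGraph V} {v : V} {n : ℕ} (e : Sym2 V) (he : e ∈ G.edgeSet)
      (h : ∀ w, CatMove (G.deleteEdges {e}) v w → CapturedIn (G.deleteEdges {e}) w n) :
      CapturedIn G v (n + 1)

/-- The cat number of `G` with the cat starting at `v` (the game value; `⊤` if
the herder cannot guarantee capture within any fixed number of cuts). -/
noncomputable def catVNum {V : Type u} (G : SimpleGraph V) (v : V) : ℕ∞ :=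
  sInf (Nat.cast '' {m : ℕ | CapturedIn G v m})

/-- The cat number of `G`: the cat picks the best starting vertex. -/
noncomputable def catNum {V : Type u} (G : SimpleGraph V) : ℕ∞ :=
  ⨆ v, catVNum G v

/-- The cat, starting at `v`, can evade capture forever: there is a set of safe
positions (remaining graph, cat location), closed under responding to any cut. -/
def CatWinFrom {V : Type u} (G : SimpleGraph V) (v : V) : Prop :=
  ∃ S : Set (SimpleGraph V × V), (G, v) ∈ S ∧
    ∀ p ∈ S, (∃ w, p.1.Adj p.2 w) ∧
      ∀ e ∈ p.1.edgeSet, ∃ w, CatMove (p.1.deleteEdges {e}) p.2 w ∧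
        (p.1.deleteEdges {e}, w) ∈ S

/-- `G` is cat-win if the cat can evade capture forever from some starting vertex. -/
def CatWin {V : Type u} (G : SimpleGraph V) : Prop :=
  ∃ v, CatWinFrom G v

/-- `Evades G v n` : the cat on `v` has a strategy giving a valid response to each
of the next `n` cuts. -/
inductive Evades {V : Type u} : SimpleGraph V → V → ℕ → Prop
  | zero {G : SimpleGraph V} {v : V} : Evades G v 0
  | succ {G : SimpleGraph V} {v : V} {n : ℕ} (move : Sym2 V → V)
      (hmove : ∀ e ∈ G.edgeSet, CatMove (G.deleteEdges {e}) v (move e))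
      (h : ∀ e ∈ G.edgeSet, Evades (G.deleteEdges {e}) (move e) n) :
      Evades G v (n + 1)

/-- `G` is `k`-evadible for every `k`: for each `n` the cat can respond to the
first `n` cuts from a suitable starting vertex. -/
def OmegaEvadible {V : Type u} (G : SimpleGraph V) : Prop :=
  ∀ n : ℕ, ∃ v, Evades G v n

/-- The infinite complete binary tree on binary strings. -/
def binTree : SimpleGraph (List Bool) :=
  SimpleGraph.fromRel (fun a b => ∃ t : Bool, b = a ++ [t])

/-- `H` is a minor of `G` : disjoint connected branch sets, one per vertex of `H`,
with an edge of `G` between branch sets for every edge of `H`. -/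
def IsMinor {W : Type*} {V : Type u} (H : SimpleGraph W) (G : SimpleGraph V) : Prop :=
  ∃ B : W → Set V,
    (∀ w, (G.induce (B w)).Connected) ∧
    (Pairwise fun w₁ w₂ => Disjoint (B w₁) (B w₂)) ∧
    (∀ w₁ w₂, H.Adj w₁ w₂ → ∃ x ∈ B w₁, ∃ y ∈ B w₂, G.Adj x y)

/-- Every pair of distinct vertices is joined by two edge-disjoint (finite) paths. -/
def TwoEdgeConnected {V : Type u} (G : SimpleGraph V) : Prop :=
  ∀ u v : V, u ≠ v → ∃ (p q : G.Walk u v), p.IsPath ∧ q.IsPath ∧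
    ∀ e ∈ p.edges, e ∉ q.edges

/-- `x` has degree exactly 1 in `G`. -/
def DegOne {V : Type u} (G : SimpleGraph V) (x : V) : Prop :=
  ∃ a, G.neighborSet x = {a}

/-- `x` has degree exactly 2 in `G`. -/
def DegTwo {V : Type u} (G : SimpleGraph V) (x : V) : Prop :=
  ∃ a b, a ≠ b ∧ G.neighborSet x = {a, b}

/-- `x` has degree exactly 3 in `G`. -/
def DegThree {V : Type u} (G : SimpleGraph V) (x : V) : Prop :=
  ∃ a b c, a ≠ b ∧ a ≠ c ∧ b ≠ c ∧ G.neighborSet x = {a, b, c}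

/-- `x` has degree at least `k` in `G`. -/
def DegGe {V : Type u} (G : SimpleGraph V) (x : V) (k : ℕ) : Prop :=
  ∃ s : Finset V, s.card = k ∧ ∀ a ∈ s, G.Adj x a

/-- A connected graph is pruned: no vertex of degree at least 3 has two pendant leaves. -/
def Pruned {V : Type u} (G : SimpleGraph V) : Prop :=
  G.Connected ∧ ¬ ∃ x y z : V, x ≠ z ∧ G.Adj y x ∧ G.Adj y z ∧
    DegOne G x ∧ DegOne G z ∧ DegGe G y 3


section CatHerding
variable {V : Type u} {G : SimpleGraph V} {v w : V} {m n : ℕ}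

lemma reach_closed {S : Set V} (hS : ∀ a ∈ S, ∀ b, G.Adj a b → b ∈ S) :
    ∀ {v w : V}, v ∈ S → G.Reachable v w → w ∈ S := by
  intro v w hv h
  obtain ⟨p⟩ := h
  induction p with
  | nil => exact hv
  | cons h p ih => exact ih (hS _ hv _ h)

lemma isolated_reachable (h : ∀ x, ¬ G.Adj v x) (hr : G.Reachable v w) : w = v := by
  obtain ⟨p⟩ := hr
  cases p with
  | nil => rfl
  | cons h' p => exact absurd h' (h _)

lemma CapturedIn.succ (h : CapturedIn G v n) : CapturedIn G v (n + 1) := by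
  induction h with
  | isolated h => exact .isolated h
  | cut e he h ih => exact .cut e he ih

lemma CapturedIn.mono (h : CapturedIn G v m) (hmn : m ≤ n) : CapturedIn G v n := by
  induction hmn with
  | refl => exact h
  | step _ ih => exact ih.succ

lemma capturedIn_one_iff :
    CapturedIn G v 1 ↔ ∀ x y, G.Adj v x → G.Adj v y → x = y := by
  constructor
  · intro h
    cases h with
    | isolated h => exact fun x y hx _ => absurd hx (h x)
    | cut e he h =>
      have hiso : ∀ x, ¬ (G.deleteEdges {e}).Adj v x := by
        intro x hx
        have hcap := h x ⟨(G.deleteEdges {e}).ne_of_adj hx, hx.reachable⟩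
        cases hcap with
        | isolated h0 => exact h0 v hx.symm
      intro x y hx hy
      have hx' : s(v, x) = e := by
        by_contra hne
        exact hiso x (SimpleGraph.deleteEdges_adj.mpr ⟨hx, by simpa using hne⟩)
      have hy' : s(v, y) = e := by
        by_contra hne
        exact hiso y (SimpleGraph.deleteEdges_adj.mpr ⟨hy, by simpa using hne⟩)
      have := hx'.trans hy'.symm
      rw [Sym2.eq_iff] at this
      rcases this with ⟨-, h2⟩ | ⟨h1, h2⟩
      · exact h2
      · exact h2.trans h1
  · intro h
    by_cases hex : ∃ x, G.Adj v x
    · obtain ⟨x, hx⟩ := hex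
      refine CapturedIn.cut s(v, x) (G.mem_edgeSet.mpr hx) ?_
      have hiso : ∀ y, ¬ (G.deleteEdges {s(v, x)}).Adj v y := by
        intro y hy
        rw [SimpleGraph.deleteEdges_adj] at hy
        exact hy.2 (by rw [← h x y hx hy.1]; exact Set.mem_singleton _)
      intro w hw
      exact absurd (isolated_reachable hiso hw.2) (Ne.symm hw.1)
    · exact CapturedIn.isolated (fun w hw => hex ⟨w, hw⟩)

lemma catVNum_le_iff : catVNum G v ≤ (n : ℕ∞) ↔ CapturedIn G v n := by
  constructor
  · intro h
    by_contra hcap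
    have : (n : ℕ∞) + 1 ≤ catVNum G v := by
      refine le_sInf ?_
      rintro b ⟨m, hm, rfl⟩
      have hnm : n < m := by
        by_contra hle
        exact hcap (CapturedIn.mono hm (not_lt.mp hle))
      exact_mod_cast hnm
    have h2 := this.trans h
    have h3 : n + 1 ≤ n := by exact_mod_cast h2
    omega
  · intro h
    exact sInf_le ⟨n, h, rfl⟩

lemma catNum_le_iff : catNum G ≤ (n : ℕ∞) ↔ ∀ v, CapturedIn G v n := by
  simp only [catNum, iSup_le_iff, catVNum_le_iff]

lemma catNum_eq_two_iff :
    catNum G = 2 ↔ (∀ v, CapturedIn G v 2) ∧ ¬ (∀ v, CapturedIn G v 1) := by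
  constructor
  · intro h
    constructor
    · exact catNum_le_iff.mp (by rw [h]; norm_num)
    · intro h1
      have := catNum_le_iff.mpr h1
      rw [h] at this
      norm_num at this
  · rintro ⟨h2, h1⟩
    refine le_antisymm (by exact_mod_cast catNum_le_iff.mpr h2) ?_
    by_contra hlt
    rw [not_le] at hlt
    have h21 : (2 : ℕ∞) = 1 + 1 := by norm_num
    rw [h21] at hlt
    have hle : catNum G ≤ (1 : ℕ∞) := (ENat.lt_add_one_iff (by simp)).mp hlt
    exact h1 (catNum_le_iff.mp (by exact_mod_cast hle))

end CatHerding

section Star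
variable {V : Type u} {G : SimpleGraph V} {v u w : V} {n : ℕ}

/-- Elimination form of `CapturedIn G v 2` for a non-isolated vertex. -/
lemma capturedIn_two_elim (h : CapturedIn G v 2) (hv : G.Adj v u) :
    ∃ e ∈ G.edgeSet, ∀ w, v ≠ w → (G.deleteEdges {e}).Reachable v w →
      ∀ x y, (G.deleteEdges {e}).Adj w x → (G.deleteEdges {e}).Adj w y → x = y := by
  cases h with
  | isolated h => exact absurd hv (h u)
  | cut e he h =>
    exact ⟨e, he, fun w hne hr x y hx hy =>
      (capturedIn_one_iff.mp (h w ⟨hne, hr⟩)) x y hx hy⟩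

lemma capturedIn_two_intro (e : Sym2 V) (he : e ∈ G.edgeSet)
    (h : ∀ w, v ≠ w → (G.deleteEdges {e}).Reachable v w →
      ∀ x y, (G.deleteEdges {e}).Adj w x → (G.deleteEdges {e}).Adj w y → x = y) :
    CapturedIn G v 2 :=
  CapturedIn.cut e he fun w hw => capturedIn_one_iff.mpr (h w hw.1 hw.2)

end Star

section IsoTransfer
universe v
variable {V : Type u} {W : Type v} {G : SimpleGraph V} {G' : SimpleGraph W}

/-- An isomorphism restricts to an isomorphism of edge-deleted graphs. -/
def isoDeleteEdges (f : G ≃g G') (e : Sym2 V) :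
    G.deleteEdges {e} ≃g G'.deleteEdges {Sym2.map f e} where
  toEquiv := f.toEquiv
  map_rel_iff' := by
    intro a b
    simp only [SimpleGraph.deleteEdges_adj, Set.mem_singleton_iff, RelIso.coe_fn_toEquiv]
    constructor
    · rintro ⟨hadj, hne⟩
      refine ⟨f.map_rel_iff.mp hadj, fun hc => hne ?_⟩
      rw [← hc, Sym2.map_pair_eq]
    · rintro ⟨hadj, hne⟩
      refine ⟨f.map_rel_iff.mpr hadj, fun hc => hne ?_⟩
      rw [← Sym2.map_pair_eq] at hc
      exact Sym2.map.injective f.injective hc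

lemma capturedIn_map {n : ℕ} {v : V} (h : CapturedIn G v n) :
    ∀ (G' : SimpleGraph W) (f : G ≃g G'), CapturedIn G' (f v) n := by
  induction h with
  | @isolated G v n hiso =>
    intro G' f
    refine CapturedIn.isolated fun w hw => ?_
    have : G'.Adj (f v) (f (f.symm w)) := by rwa [f.apply_symm_apply]
    exact hiso _ (f.map_rel_iff.mp this)
  | @cut G v n e he h ih =>
    intro G' f
    refine CapturedIn.cut (Sym2.map f e) (f.map_mem_edgeSet_iff.mpr he) ?_
    intro w hw
    set f' := isoDeleteEdges f e with hf'
    have hw' : CatMove (G.deleteEdges {e}) v (f'.symm w) := by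
      obtain ⟨hne, hr⟩ := hw
      constructor
      · intro hc
        apply hne
        rw [hc]
        exact f'.apply_symm_apply w
      · have h2 : (G.deleteEdges {e}).Reachable (f'.symm (f' v)) (f'.symm w) :=
          hr.map f'.symm.toHom
        rwa [f'.symm_apply_apply] at h2
    have := ih _ hw' _ f'
    rwa [f'.apply_symm_apply] at this

lemma catNum_map (f : G ≃g G') : catNum G = catNum G' := by
  have key : ∀ (v : V), catVNum G v = catVNum G' (f v) := by
    intro v
    unfold catVNum
    congr 1
    ext x
    constructor
    · rintro ⟨m, hm, rfl⟩
      exact ⟨m, capturedIn_map hm _ f, rfl⟩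
    · rintro ⟨m, hm, rfl⟩
      refine ⟨m, ?_, rfl⟩
      have := capturedIn_map hm _ f.symm
      rwa [f.symm_apply_apply] at this
  apply le_antisymm
  · refine iSup_le fun v => ?_
    rw [key v]
    exact le_iSup (catVNum G') (f v)
  · refine iSup_le fun w => ?_
    have : catVNum G' w = catVNum G (f.symm w) := by
      rw [key (f.symm w), f.apply_symm_apply]
    rw [this]
    exact le_iSup (catVNum G) (f.symm w)

end IsoTransfer

section IsoBuilders
variable {V : Type u} {G : SimpleGraph V}

lemma iso_C3 {x y z : V} (hxy : x ≠ y) (hxz : x ≠ z) (hyz : y ≠ z)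
    (hV : ∀ w, w = x ∨ w = y ∨ w = z)
    (axy : G.Adj x y) (ayz : G.Adj y z) (axz : G.Adj x z) :
    Nonempty (G ≃g SimpleGraph.cycleGraph 3) := by
  classical
  refine ⟨⟨⟨fun w => if w = x then 0 else if w = y then 1 else 2, ![x, y, z], ?_, ?_⟩, ?_⟩⟩
  · intro w
    rcases hV w with rfl | rfl | rfl <;>
      simp [hxy, hxz, hyz, Ne.symm hxy, Ne.symm hxz, Ne.symm hyz]
  · intro i
    fin_cases i <;>
      simp [hxy, hxz, hyz, Ne.symm hxy, Ne.symm hxz, Ne.symm hyz]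
  · intro a b
    rw [SimpleGraph.cycleGraph_three_eq_top]
    rcases hV a with rfl | rfl | rfl <;> rcases hV b with rfl | rfl | rfl <;>
      simp [hxy, hxz, hyz, Ne.symm hxy, Ne.symm hxz, Ne.symm hyz,
        axy, ayz, axz, axy.symm, ayz.symm, axz.symm, SimpleGraph.irrefl]

lemma iso_P3 {x y z : V} (hxy : x ≠ y) (hxz : x ≠ z) (hyz : y ≠ z)
    (hV : ∀ w, w = x ∨ w = y ∨ w = z)
    (axy : G.Adj x y) (ayz : G.Adj y z) (naxz : ¬ G.Adj x z) :
    Nonempty (G ≃g SimpleGraph.pathGraph 3) := by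
  classical
  have nazx : ¬ G.Adj z x := fun h => naxz h.symm
  refine ⟨⟨⟨fun w => if w = x then 0 else if w = y then 1 else 2, ![x, y, z], ?_, ?_⟩, ?_⟩⟩
  · intro w
    rcases hV w with rfl | rfl | rfl <;>
      simp [hxy, hxz, hyz, Ne.symm hxy, Ne.symm hxz, Ne.symm hyz]
  · intro i
    fin_cases i <;>
      simp [hxy, hxz, hyz, Ne.symm hxy, Ne.symm hxz, Ne.symm hyz]
  · intro a b
    rcases hV a with rfl | rfl | rfl <;> rcases hV b with rfl | rfl | rfl <;>
      simp [SimpleGraph.pathGraph_adj, hxy, hxz, hyz, Ne.symm hxy, Ne.symm hxz, Ne.symm hyz,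
        axy, ayz, naxz, nazx, axy.symm, ayz.symm, SimpleGraph.irrefl]

lemma iso_P4 {x y z t : V} (hxy : x ≠ y) (hxz : x ≠ z) (hxt : x ≠ t)
    (hyz : y ≠ z) (hyt : y ≠ t) (hzt : z ≠ t)
    (hV : ∀ w, w = x ∨ w = y ∨ w = z ∨ w = t)
    (axy : G.Adj x y) (ayz : G.Adj y z) (azt : G.Adj z t)
    (naxz : ¬ G.Adj x z) (naxt : ¬ G.Adj x t) (nayt : ¬ G.Adj y t) :
    Nonempty (G ≃g SimpleGraph.pathGraph 4) := by
  classical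
  have nazx : ¬ G.Adj z x := fun h => naxz h.symm
  have natx : ¬ G.Adj t x := fun h => naxt h.symm
  have naty : ¬ G.Adj t y := fun h => nayt h.symm
  refine ⟨⟨⟨fun w => if w = x then 0 else if w = y then 1 else if w = z then 2 else 3,
      ![x, y, z, t], ?_, ?_⟩, ?_⟩⟩
  · intro w
    rcases hV w with rfl | rfl | rfl | rfl <;>
      simp [hxy, hxz, hyz, hxt, hyt, hzt, Ne.symm hxy, Ne.symm hxz, Ne.symm hyz,
        Ne.symm hxt, Ne.symm hyt, Ne.symm hzt]
  · intro i
    fin_cases i <;>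
      simp [hxy, hxz, hyz, hxt, hyt, hzt, Ne.symm hxy, Ne.symm hxz, Ne.symm hyz,
        Ne.symm hxt, Ne.symm hyt, Ne.symm hzt]
  · intro a b
    rcases hV a with rfl | rfl | rfl | rfl <;> rcases hV b with rfl | rfl | rfl | rfl <;>
      simp [SimpleGraph.pathGraph_adj, hxy, hxz, hyz, hxt, hyt, hzt, Ne.symm hxy,
        Ne.symm hxz, Ne.symm hyz, Ne.symm hxt, Ne.symm hyt, Ne.symm hzt,
        axy, ayz, azt, naxz, naxt, nayt, nazx, natx, naty,
        axy.symm, ayz.symm, azt.symm, SimpleGraph.irrefl] <;>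
      decide

end IsoBuilders

section Concrete

instance decMemSingletonSet {α : Type*} [DecidableEq α] (s : α) :
    ∀ x, Decidable (x ∈ ({s} : Set α)) := fun x =>
  decidable_of_iff (x = s) Iff.rfl

instance decDeleteEdgesAdj {α : Type*} (G : SimpleGraph α) [DecidableEq α]
    [DecidableRel G.Adj] (e : Sym2 α) :
    DecidableRel (G.deleteEdges {e}).Adj := fun a b =>
  decidable_of_iff (G.Adj a b ∧ ¬ s(a, b) = e)
    (by rw [SimpleGraph.deleteEdges_adj]; simp)

instance decPathGraphAdj (n : ℕ) : DecidableRel (SimpleGraph.pathGraph n).Adj := fun a b =>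
  decidable_of_iff _ SimpleGraph.pathGraph_adj.symm

/-- Helper: if after deleting `e` every vertex other than `v` has at most one
neighbor, then `v` is captured in two moves. -/
lemma capturedIn_two_of_subsingleton {α : Type u} {G : SimpleGraph α} {v : α}
    (e : Sym2 α) (he : e ∈ G.edgeSet)
    (h : ∀ w, v ≠ w → ∀ x y, (G.deleteEdges {e}).Adj w x → (G.deleteEdges {e}).Adj w y → x = y) :
    CapturedIn G v 2 :=
  capturedIn_two_intro e he (fun w hw _ => h w hw)

lemma catNum_P3 : catNum (SimpleGraph.pathGraph 3) = 2 := by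
  rw [catNum_eq_two_iff]
  constructor
  · intro v
    refine capturedIn_two_of_subsingleton s(1, 2) ((SimpleGraph.mem_edgeSet _).mpr (by decide)) ?_
    revert v
    decide
  · intro h
    have := capturedIn_one_iff.mp (h 1) 0 2 (by decide) (by decide)
    simp at this

lemma catNum_P4 : catNum (SimpleGraph.pathGraph 4) = 2 := by
  rw [catNum_eq_two_iff]
  constructor
  · intro v
    refine capturedIn_two_of_subsingleton s(1, 2) ((SimpleGraph.mem_edgeSet _).mpr (by decide)) ?_
    revert v
    decide
  · intro h
    have := capturedIn_one_iff.mp (h 1) 0 2 (by decide) (by decide)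
    simp at this

lemma catNum_C3 : catNum (SimpleGraph.cycleGraph 3) = 2 := by
  rw [catNum_eq_two_iff]
  constructor
  · intro v
    fin_cases v
    · exact capturedIn_two_of_subsingleton s(1, 2)
        ((SimpleGraph.mem_edgeSet _).mpr (by decide)) (by decide)
    · exact capturedIn_two_of_subsingleton s(0, 2)
        ((SimpleGraph.mem_edgeSet _).mpr (by decide)) (by decide)
    · exact capturedIn_two_of_subsingleton s(0, 1)
        ((SimpleGraph.mem_edgeSet _).mpr (by decide)) (by decide)
  · intro h
    have := capturedIn_one_iff.mp (h 0) 1 2 (by decide) (by decide)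
    simp at this

end Concrete

section Forward
variable {V : Type u} {G : SimpleGraph V}

/-- The herder's guarantee after the first cut: every vertex reachable from `v`
(other than `v`) in `G - e` has at most one neighbor there. -/
def StarAt (G : SimpleGraph V) (v : V) (e : Sym2 V) : Prop :=
  ∀ w, v ≠ w → (G.deleteEdges {e}).Reachable v w →
    ∀ x y, (G.deleteEdges {e}).Adj w x → (G.deleteEdges {e}).Adj w y → x = y

lemma capturedIn_two_starAt {v u : V} (h : CapturedIn G v 2) (hv : G.Adj v u) :
    ∃ e ∈ G.edgeSet, StarAt G v e := capturedIn_two_elim h hv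

lemma starAt_adj {v w : V} {e : Sym2 V} (h : StarAt G v e)
    (hadj : (G.deleteEdges {e}).Adj v w) :
    ∀ x y, (G.deleteEdges {e}).Adj w x → (G.deleteEdges {e}).Adj w y → x = y :=
  h w (hadj.ne) hadj.reachable

lemma adj_delete_iff {x y : V} {e : Sym2 V} :
    (G.deleteEdges {e}).Adj x y ↔ G.Adj x y ∧ s(x, y) ≠ e := by
  rw [SimpleGraph.deleteEdges_adj]
  simp

lemma pruned_violation (hp : Pruned G) {y x z a b c : V} (hxz : x ≠ z)
    (hyx : G.Adj y x) (hyz : G.Adj y z)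
    (hx1 : ∀ w, G.Adj x w → w = y) (hz1 : ∀ w, G.Adj z w → w = y)
    (hab : a ≠ b) (hac : a ≠ c) (hbc : b ≠ c)
    (hya : G.Adj y a) (hyb : G.Adj y b) (hyc : G.Adj y c) : False := by
  classical
  refine hp.2 ⟨x, y, z, hxz, hyx, hyz, ⟨y, ?_⟩, ⟨y, ?_⟩, ⟨{a, b, c}, ?_, ?_⟩⟩
  · ext w
    simp only [SimpleGraph.mem_neighborSet, Set.mem_singleton_iff]
    exact ⟨hx1 w, fun hw => hw ▸ hyx.symm⟩
  · ext w
    simp only [SimpleGraph.mem_neighborSet, Set.mem_singleton_iff]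
    exact ⟨hz1 w, fun hw => hw ▸ hyz.symm⟩
  · rw [Finset.card_insert_of_notMem (by simp [hab, hac]),
      Finset.card_insert_of_notMem (by simp [hbc])]
    simp
  · intro w hw
    simp only [Finset.mem_insert, Finset.mem_singleton] at hw
    rcases hw with rfl | rfl | rfl <;> assumption

end Forward

section CaseA
variable {V : Type u} {G : SimpleGraph V}

lemma caseA (hp : Pruned G) (Hcap : ∀ v, CapturedIn G v 2)
    {v₀ b p q : V} (hpq : p ≠ q) (hvp : G.Adj v₀ p) (hvq : G.Adj v₀ q)
    (hvb : G.Adj v₀ b) (hstar : StarAt G v₀ s(v₀, b)) :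
    Nonempty (G ≃g SimpleGraph.pathGraph 3) ∨ Nonempty (G ≃g SimpleGraph.pathGraph 4) := by
  classical
  have hconn := hp.1
  have hbv : b ≠ v₀ := hvb.ne'
  -- choose a neighbor ℓ of v₀ different from b
  obtain ⟨ℓ, hvℓ, hℓb⟩ : ∃ ℓ, G.Adj v₀ ℓ ∧ ℓ ≠ b := by
    by_cases h : p = b
    · exact ⟨q, hvq, fun hq => hpq (h.trans hq.symm)⟩
    · exact ⟨p, hvp, h⟩
  have hℓv : ℓ ≠ v₀ := hvℓ.ne'
  -- every neighbor of v₀ other than b is a pendant leaf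
  have hleaf : ∀ n, G.Adj v₀ n → n ≠ b → ∀ x, G.Adj n x → x = v₀ := by
    intro n hvn hnb x hnx
    have hne : n ≠ v₀ := hvn.ne'
    have hD : (G.deleteEdges {s(v₀, b)}).Adj v₀ n := by
      rw [adj_delete_iff]
      refine ⟨hvn, fun hc => ?_⟩
      rw [Sym2.eq_iff] at hc
      rcases hc with ⟨-, h2⟩ | ⟨h1, -⟩
      · exact hnb h2
      · exact hvb.ne h1
    have sub := starAt_adj hstar hD
    have hDx : (G.deleteEdges {s(v₀, b)}).Adj n x := by
      rw [adj_delete_iff]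
      refine ⟨hnx, fun hc => ?_⟩
      rw [Sym2.eq_iff] at hc
      rcases hc with ⟨h1, -⟩ | ⟨h1, -⟩
      · exact hne h1
      · exact hnb h1
    exact sub x v₀ hDx hD.symm
  -- all neighbors of v₀ lie in {ℓ, b}
  have hnbr : ∀ x, G.Adj v₀ x → x = ℓ ∨ x = b := by
    intro x hx
    by_contra hcon
    push_neg at hcon
    obtain ⟨hxℓ, hxb⟩ := hcon
    exact pruned_violation hp (fun h => hxℓ h.symm : ℓ ≠ x) hvℓ hx
      (hleaf ℓ hvℓ hℓb) (hleaf x hx hxb)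
      (fun h => hxℓ h.symm) hℓb hxb hvℓ hx hvb
  -- the herder's guarantee at b
  obtain ⟨e₁, he₁, hstar₁⟩ := capturedIn_two_starAt (Hcap b) hvb.symm
  have he₁mem : e₁ = s(v₀, ℓ) ∨ e₁ = s(v₀, b) := by
    by_contra hcon
    push_neg at hcon
    obtain ⟨h1, h2⟩ := hcon
    have hbv0 : (G.deleteEdges {e₁}).Adj b v₀ := by
      rw [adj_delete_iff]
      exact ⟨hvb.symm, fun hc => h2 (hc.symm.trans Sym2.eq_swap)⟩
    have sub := starAt_adj hstar₁ hbv0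
    have hva : (G.deleteEdges {e₁}).Adj v₀ ℓ := by
      rw [adj_delete_iff]; exact ⟨hvℓ, fun hc => h1 hc.symm⟩
    have hvb' : (G.deleteEdges {e₁}).Adj v₀ b := by
      rw [adj_delete_iff]; exact ⟨hvb, fun hc => h2 hc.symm⟩
    exact hℓb (sub ℓ b hva hvb')
  -- every neighbor of b other than v₀ is a pendant leaf
  have hbleaf : ∀ m, G.Adj b m → m ≠ v₀ → ∀ x, G.Adj m x → x = b := by
    intro m hbm hmv x hmx
    have hmb : m ≠ b := hbm.ne'
    rcases he₁mem with he | he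
    · have hbℓ : b ≠ ℓ := Ne.symm hℓb
      have hAdj : (G.deleteEdges {e₁}).Adj b m := by
        rw [adj_delete_iff, he]
        refine ⟨hbm, fun hc => ?_⟩
        rw [Sym2.eq_iff] at hc
        rcases hc with ⟨h1, -⟩ | ⟨h1, -⟩
        · exact hbv h1
        · exact hbℓ h1
      have sub := starAt_adj hstar₁ hAdj
      have hAdjx : (G.deleteEdges {e₁}).Adj m x := by
        rw [adj_delete_iff, he]
        refine ⟨hmx, fun hc => ?_⟩
        rw [Sym2.eq_iff] at hc
        rcases hc with ⟨h1, -⟩ | ⟨h1, -⟩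
        · exact hmv h1
        · exact hbv (hleaf ℓ hvℓ hℓb b (h1 ▸ hbm).symm)
      exact sub x b hAdjx hAdj.symm
    · have hAdj : (G.deleteEdges {e₁}).Adj b m := by
        rw [adj_delete_iff, he]
        refine ⟨hbm, fun hc => ?_⟩
        rw [Sym2.eq_iff] at hc
        rcases hc with ⟨h1, -⟩ | ⟨-, h2⟩
        · exact hbv h1
        · exact hmv h2
      have sub := starAt_adj hstar₁ hAdj
      have hAdjx : (G.deleteEdges {e₁}).Adj m x := by
        rw [adj_delete_iff, he]
        refine ⟨hmx, fun hc => ?_⟩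
        rw [Sym2.eq_iff] at hc
        rcases hc with ⟨h1, -⟩ | ⟨h1, -⟩
        · exact hmv h1
        · exact hmb h1
      exact sub x b hAdjx hAdj.symm
  -- the vertex set
  have hV : ∀ w, w = ℓ ∨ w = v₀ ∨ w = b ∨ (G.Adj b w ∧ w ≠ v₀) := by
    intro w
    have hmem : w ∈ {w : V | w = ℓ ∨ w = v₀ ∨ w = b ∨ (G.Adj b w ∧ w ≠ v₀)} := by
      refine reach_closed ?_ (Or.inr (Or.inl rfl)) (hconn.preconnected v₀ w)
      rintro u hu y hy
      simp only [Set.mem_setOf_eq] at hu ⊢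
      rcases hu with h | h | h | ⟨hbu, huv⟩
      · exact Or.inr (Or.inl (hleaf ℓ hvℓ hℓb y (h ▸ hy)))
      · rcases hnbr y (h ▸ hy) with h2 | h2
        · exact Or.inl h2
        · exact Or.inr (Or.inr (Or.inl h2))
      · by_cases hyv : y = v₀
        · exact Or.inr (Or.inl hyv)
        · exact Or.inr (Or.inr (Or.inr ⟨h ▸ hy, hyv⟩))
      · exact Or.inr (Or.inr (Or.inl (hbleaf u hbu huv y hy)))
    simpa using hmem
  -- at most one pendant leaf at b
  have hext : ∀ m₁ m₂, G.Adj b m₁ → m₁ ≠ v₀ → G.Adj b m₂ → m₂ ≠ v₀ → m₁ = m₂ := by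
    intro m₁ m₂ h1 h1v h2 h2v
    by_contra hne
    exact pruned_violation hp hne h1 h2 (hbleaf m₁ h1 h1v) (hbleaf m₂ h2 h2v)
      (Ne.symm h1v) (Ne.symm h2v) hne hvb.symm h1 h2
  have naℓb : ¬ G.Adj ℓ b := fun h => hbv (hleaf ℓ hvℓ hℓb b h)
  by_cases hex : ∃ m, G.Adj b m ∧ m ≠ v₀
  · obtain ⟨m, hbm, hmv⟩ := hex
    right
    refine iso_P4 hℓv hℓb ?_ hvb.ne (Ne.symm hmv) hbm.ne ?_ hvℓ.symm hvb hbm naℓb ?_ ?_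
    · exact fun h => hbv (hleaf ℓ hvℓ hℓb b (h.symm ▸ hbm).symm)
    · intro w
      rcases hV w with h | h | h | ⟨h1, h2⟩
      · exact Or.inl h
      · exact Or.inr (Or.inl h)
      · exact Or.inr (Or.inr (Or.inl h))
      · exact Or.inr (Or.inr (Or.inr (hext w m h1 h2 hbm hmv)))
    · exact fun h => hmv (hleaf ℓ hvℓ hℓb m h)
    · intro h
      rcases hnbr m h with rfl | rfl
      · exact hbv (hleaf m hvℓ hℓb b hbm.symm)
      · exact hbm.ne rfl
  · left
    refine iso_P3 hℓv hℓb hvb.ne ?_ hvℓ.symm hvb naℓb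
    intro w
    rcases hV w with h | h | h | ⟨h1, h2⟩
    · exact Or.inl h
    · exact Or.inr (Or.inl h)
    · exact Or.inr (Or.inr h)
    · exact absurd (⟨w, h1, h2⟩ : ∃ m, G.Adj b m ∧ m ≠ v₀) hex
end CaseA

section CaseB
variable {V : Type u} {G : SimpleGraph V}

lemma nbr_step {v₀ a b : V} (hva' : v₀ ≠ a) (hvb' : v₀ ≠ b)
    (hstar : StarAt G v₀ s(a, b)) :
    ∀ n, G.Adj v₀ n → ∀ x, G.Adj n x → x = v₀ ∨ (n = a ∧ x = b) ∨ (n = b ∧ x = a) := by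
  intro n hvn x hnx
  have hD : (G.deleteEdges {s(a, b)}).Adj v₀ n := by
    rw [adj_delete_iff]
    refine ⟨hvn, fun hc => ?_⟩
    rw [Sym2.eq_iff] at hc
    rcases hc with ⟨h1, -⟩ | ⟨h1, -⟩
    · exact hva' h1
    · exact hvb' h1
  have sub := starAt_adj hstar hD
  by_cases hc : s(n, x) = s(a, b)
  · rw [Sym2.eq_iff] at hc
    rcases hc with ⟨h1, h2⟩ | ⟨h1, h2⟩
    · exact Or.inr (Or.inl ⟨h1, h2⟩)
    · exact Or.inr (Or.inr ⟨h1, h2⟩)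
  · have hDx : (G.deleteEdges {s(a, b)}).Adj n x := by
      rw [adj_delete_iff]; exact ⟨hnx, hc⟩
    exact Or.inl (sub x v₀ hDx hD.symm)

lemma caseB2 (hp : Pruned G) (Hcap : ∀ v, CapturedIn G v 2)
    {v₀ p q a b : V} (hpq : p ≠ q) (hvp : G.Adj v₀ p) (hvq : G.Adj v₀ q)
    (hva' : v₀ ≠ a) (hvb' : v₀ ≠ b) (hab : G.Adj a b) (hstar : StarAt G v₀ s(a, b))
    (hva : G.Adj v₀ a) (hnvb : ¬ G.Adj v₀ b) :
    Nonempty (G ≃g SimpleGraph.pathGraph 4) := by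
  classical
  have hconn := hp.1
  have hba : b ≠ a := hab.ne'
  have hbv0 : b ≠ v₀ := Ne.symm hvb'
  have hstep := nbr_step hva' hvb' hstar
  -- the neighbors of a are v₀ and b
  have haleaf : ∀ x, G.Adj a x → x = v₀ ∨ x = b := by
    intro x hax
    rcases hstep a hva x hax with h | ⟨-, h2⟩ | ⟨h1, -⟩
    · exact Or.inl h
    · exact Or.inr h2
    · exact absurd h1.symm hba
  -- neighbors of v₀ other than a are pendant leaves
  have hleaf : ∀ n, G.Adj v₀ n → n ≠ a → ∀ x, G.Adj n x → x = v₀ := by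
    intro n hvn hna x hnx
    rcases hstep n hvn x hnx with h | ⟨h1, -⟩ | ⟨h1, -⟩
    · exact h
    · exact absurd h1 hna
    · exact absurd (h1 ▸ hvn) hnvb
  -- choose a neighbor ℓ of v₀ different from a
  obtain ⟨ℓ, hvℓ, hℓa⟩ : ∃ ℓ, G.Adj v₀ ℓ ∧ ℓ ≠ a := by
    by_cases h : p = a
    · exact ⟨q, hvq, fun hq => hpq (h.trans hq.symm)⟩
    · exact ⟨p, hvp, h⟩
  have hℓv : ℓ ≠ v₀ := hvℓ.ne'
  have hbℓ : b ≠ ℓ := fun h => hnvb (h.symm ▸ hvℓ)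
  -- all neighbors of v₀ lie in {a, ℓ}
  have hnbr : ∀ x, G.Adj v₀ x → x = a ∨ x = ℓ := by
    intro x hx
    by_contra hcon
    push_neg at hcon
    obtain ⟨hxa, hxℓ⟩ := hcon
    exact pruned_violation hp (fun h => hxℓ h.symm : ℓ ≠ x) hvℓ hx
      (hleaf ℓ hvℓ hℓa) (hleaf x hx hxa)
      (fun h => hxℓ h.symm) hℓa hxa hvℓ hx hva
  -- the herder's guarantee at a
  obtain ⟨e₃, he₃, hstar₃⟩ := capturedIn_two_starAt (Hcap a) hab
  have he₃mem : e₃ = s(a, v₀) ∨ e₃ = s(v₀, ℓ) := by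
    by_contra hcon
    push_neg at hcon
    obtain ⟨h1, h2⟩ := hcon
    have hAv : (G.deleteEdges {e₃}).Adj a v₀ := by
      rw [adj_delete_iff]; exact ⟨hva.symm, fun hc => h1 hc.symm⟩
    have sub := starAt_adj hstar₃ hAv
    have hA1 : (G.deleteEdges {e₃}).Adj v₀ ℓ := by
      rw [adj_delete_iff]; exact ⟨hvℓ, fun hc => h2 hc.symm⟩
    have hA2 : (G.deleteEdges {e₃}).Adj v₀ a := by
      rw [adj_delete_iff]; exact ⟨hva, fun hc => h1 (hc.symm.trans Sym2.eq_swap)⟩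
    exact hℓa (sub ℓ a hA1 hA2)
  -- b is a pendant leaf at a
  have hbleaf : ∀ x, G.Adj b x → x = a := by
    intro x hbx
    have hAab : (G.deleteEdges {e₃}).Adj a b := by
      rw [adj_delete_iff]
      refine ⟨hab, fun hc => ?_⟩
      rcases he₃mem with he | he <;> rw [he, Sym2.eq_iff] at hc
      · rcases hc with ⟨-, h2⟩ | ⟨h1, -⟩
        · exact hbv0 h2
        · exact hva' h1.symm
      · rcases hc with ⟨h1, -⟩ | ⟨-, h2⟩
        · exact hva' h1.symm
        · exact hbv0 h2
    have sub := starAt_adj hstar₃ hAab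
    have hAbx : (G.deleteEdges {e₃}).Adj b x := by
      rw [adj_delete_iff]
      refine ⟨hbx, fun hc => ?_⟩
      rcases he₃mem with he | he <;> rw [he, Sym2.eq_iff] at hc
      · rcases hc with ⟨h1, -⟩ | ⟨h1, -⟩
        · exact hba h1
        · exact hbv0 h1
      · rcases hc with ⟨h1, -⟩ | ⟨h1, -⟩
        · exact hbv0 h1
        · exact hbℓ h1
    have hAba : (G.deleteEdges {e₃}).Adj b a := by
      rw [adj_delete_iff]
      refine ⟨hab.symm, fun hc => ?_⟩
      rcases he₃mem with he | he <;> rw [he, Sym2.eq_iff] at hc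
      · rcases hc with ⟨h1, -⟩ | ⟨h1, -⟩
        · exact hba h1
        · exact hbv0 h1
      · rcases hc with ⟨h1, -⟩ | ⟨h1, -⟩
        · exact hbv0 h1
        · exact hbℓ h1
    exact sub x a hAbx hAba
  -- the vertex set
  have hV : ∀ w, w = ℓ ∨ w = v₀ ∨ w = a ∨ w = b := by
    intro w
    have hmem : w ∈ {w : V | w = ℓ ∨ w = v₀ ∨ w = a ∨ w = b} := by
      refine reach_closed ?_ (Or.inr (Or.inl rfl)) (hconn.preconnected v₀ w)
      rintro u hu y hy
      simp only [Set.mem_setOf_eq] at hu ⊢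
      rcases hu with h | h | h | h
      · exact Or.inr (Or.inl (hleaf ℓ hvℓ hℓa y (h ▸ hy)))
      · rcases hnbr y (h ▸ hy) with h2 | h2
        · exact Or.inr (Or.inr (Or.inl h2))
        · exact Or.inl h2
      · rcases haleaf y (h ▸ hy) with h2 | h2
        · exact Or.inr (Or.inl h2)
        · exact Or.inr (Or.inr (Or.inr h2))
      · exact Or.inr (Or.inr (Or.inl (hbleaf y (h ▸ hy))))
    simpa using hmem
  refine iso_P4 hℓv hℓa (Ne.symm hbℓ) hva' hvb' hab.ne hV hvℓ.symm hva hab ?_ ?_ hnvb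
  · exact fun h => hva' (hleaf ℓ hvℓ hℓa a h).symm
  · exact fun h => hvb' (hleaf ℓ hvℓ hℓa b h).symm

lemma caseB (hp : Pruned G) (Hcap : ∀ v, CapturedIn G v 2)
    {v₀ p q a b : V} (hpq : p ≠ q) (hvp : G.Adj v₀ p) (hvq : G.Adj v₀ q)
    (hva' : v₀ ≠ a) (hvb' : v₀ ≠ b) (hab : G.Adj a b) (hstar : StarAt G v₀ s(a, b)) :
    Nonempty (G ≃g SimpleGraph.cycleGraph 3) ∨ Nonempty (G ≃g SimpleGraph.pathGraph 4) := by
  classical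
  have hconn := hp.1
  have hstep := nbr_step hva' hvb' hstar
  by_cases hA : G.Adj v₀ a <;> by_cases hB : G.Adj v₀ b
  · -- B1 : triangle
    left
    have haleaf : ∀ x, G.Adj a x → x = v₀ ∨ x = b := by
      intro x hax
      rcases hstep a hA x hax with h | ⟨-, h2⟩ | ⟨h1, -⟩
      · exact Or.inl h
      · exact Or.inr h2
      · exact absurd h1.symm hab.ne'
    have hbleaf : ∀ x, G.Adj b x → x = v₀ ∨ x = a := by
      intro x hbx
      rcases hstep b hB x hbx with h | ⟨h1, -⟩ | ⟨-, h2⟩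
      · exact Or.inl h
      · exact absurd h1 hab.ne'
      · exact Or.inr h2
    have hno : ∀ m, G.Adj v₀ m → m = a ∨ m = b := by
      intro m hvm
      by_contra hcon
      push_neg at hcon
      obtain ⟨hma, hmb⟩ := hcon
      obtain ⟨e₂, he₂, hstar₂⟩ := capturedIn_two_starAt (Hcap a) hab
      by_cases hc2 : e₂ = s(a, v₀)
      · have hAab : (G.deleteEdges {e₂}).Adj a b := by
          rw [adj_delete_iff, hc2]
          refine ⟨hab, fun hc => ?_⟩
          rw [Sym2.eq_iff] at hc
          rcases hc with ⟨-, h2⟩ | ⟨h1, -⟩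
          · exact hvb' h2.symm
          · exact hva' h1.symm
        have sub := starAt_adj hstar₂ hAab
        have hA1 : (G.deleteEdges {e₂}).Adj b v₀ := by
          rw [adj_delete_iff, hc2]
          refine ⟨hB.symm, fun hc => ?_⟩
          rw [Sym2.eq_iff] at hc
          rcases hc with ⟨h1, -⟩ | ⟨h1, -⟩
          · exact hab.ne' h1
          · exact hvb' h1.symm
        have hA2 : (G.deleteEdges {e₂}).Adj b a := by
          rw [adj_delete_iff, hc2]
          refine ⟨hab.symm, fun hc => ?_⟩
          rw [Sym2.eq_iff] at hc
          rcases hc with ⟨h1, -⟩ | ⟨h1, -⟩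
          · exact hab.ne' h1
          · exact hvb' h1.symm
        exact hva' (sub v₀ a hA1 hA2)
      · have hAav : (G.deleteEdges {e₂}).Adj a v₀ := by
          rw [adj_delete_iff]; exact ⟨hA.symm, fun hc => hc2 hc.symm⟩
        have sub := starAt_adj hstar₂ hAav
        by_cases hc3 : e₂ = s(v₀, b)
        · have hA1 : (G.deleteEdges {e₂}).Adj v₀ a := by
            rw [adj_delete_iff, hc3]
            refine ⟨hA, fun hc => ?_⟩
            rw [Sym2.eq_iff] at hc
            rcases hc with ⟨-, h2⟩ | ⟨h1, -⟩
            · exact hab.ne (h2.symm ▸ rfl)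
            · exact hvb' h1
          have hA2 : (G.deleteEdges {e₂}).Adj v₀ m := by
            rw [adj_delete_iff, hc3]
            refine ⟨hvm, fun hc => ?_⟩
            rw [Sym2.eq_iff] at hc
            rcases hc with ⟨-, h2⟩ | ⟨h1, -⟩
            · exact hmb h2
            · exact hvb' h1
          exact hma (sub a m hA1 hA2).symm
        · have hA1 : (G.deleteEdges {e₂}).Adj v₀ a := by
            rw [adj_delete_iff]
            exact ⟨hA, fun hc => hc2 (hc.symm.trans Sym2.eq_swap)⟩
          have hA2 : (G.deleteEdges {e₂}).Adj v₀ b := by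
            rw [adj_delete_iff]; exact ⟨hB, fun hc => hc3 hc.symm⟩
          exact hab.ne (sub a b hA1 hA2)
    have hV : ∀ w, w = v₀ ∨ w = a ∨ w = b := by
      intro w
      have hmem : w ∈ {w : V | w = v₀ ∨ w = a ∨ w = b} := by
        refine reach_closed ?_ (Or.inl rfl) (hconn.preconnected v₀ w)
        rintro u hu y hy
        simp only [Set.mem_setOf_eq] at hu ⊢
        rcases hu with h | h | h
        · rcases hno y (h ▸ hy) with h2 | h2
          · exact Or.inr (Or.inl h2)
          · exact Or.inr (Or.inr h2)
        · rcases haleaf y (h ▸ hy) with h2 | h2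
          · exact Or.inl h2
          · exact Or.inr (Or.inr h2)
        · rcases hbleaf y (h ▸ hy) with h2 | h2
          · exact Or.inl h2
          · exact Or.inr (Or.inl h2)
      simpa using hmem
    exact iso_C3 hva' hvb' hab.ne hV hA hab hB
  · -- B2 : Adj v₀ a, ¬ Adj v₀ b
    exact Or.inr (caseB2 hp Hcap hpq hvp hvq hva' hvb' hab hstar hA hB)
  · -- B2 mirrored
    right
    have hstar' : StarAt G v₀ s(b, a) := by rwa [Sym2.eq_swap]
    exact caseB2 hp Hcap hpq hvp hvq hvb' hva' hab.symm hstar' hB hA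
  · -- B3 : impossible
    exfalso
    have hleafall : ∀ n, G.Adj v₀ n → ∀ x, G.Adj n x → x = v₀ := by
      intro n hvn x hnx
      rcases hstep n hvn x hnx with h | ⟨h1, -⟩ | ⟨h1, -⟩
      · exact h
      · exact absurd (h1 ▸ hvn) hA
      · exact absurd (h1 ▸ hvn) hB
    have hnbr : ∀ x, G.Adj v₀ x → x = p ∨ x = q := by
      intro x hx
      by_contra hcon
      push_neg at hcon
      obtain ⟨hxp, hxq⟩ := hcon
      exact pruned_violation hp hpq hvp hvq (hleafall p hvp) (hleafall q hvq)
        hpq (fun h => hxp h.symm) (fun h => hxq h.symm) hvp hvq hx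
    have hV : ∀ w, w = v₀ ∨ w = p ∨ w = q := by
      intro w
      have hmem : w ∈ {w : V | w = v₀ ∨ w = p ∨ w = q} := by
        refine reach_closed ?_ (Or.inl rfl) (hconn.preconnected v₀ w)
        rintro u hu y hy
        simp only [Set.mem_setOf_eq] at hu ⊢
        rcases hu with h | h | h
        · rcases hnbr y (h ▸ hy) with h2 | h2
          · exact Or.inr (Or.inl h2)
          · exact Or.inr (Or.inr h2)
        · exact Or.inl (hleafall p hvp y (h ▸ hy))
        · exact Or.inl (hleafall q hvq y (h ▸ hy))
      simpa using hmem
    rcases hV a with h | h | h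
    · exact hva' h.symm
    · exact hA ((hleafall p hvp b (h ▸ hab)) ▸ hab).symm
    · exact hA ((hleafall q hvq b (h ▸ hab)) ▸ hab).symm

end CaseB

/-- a connected pruned graph has cat number 2 iff it is `C₃`, `P₃` or `P₄`. -/
theorem pruned_catNum_two_iff {V : Type u} (G : SimpleGraph V) (hp : Pruned G) :
    catNum G = 2 ↔
      Nonempty (G ≃g SimpleGraph.cycleGraph 3) ∨
      Nonempty (G ≃g SimpleGraph.pathGraph 3) ∨
      Nonempty (G ≃g SimpleGraph.pathGraph 4) := by
  constructor
  · intro h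
    rw [catNum_eq_two_iff] at h
    obtain ⟨Hcap, Hn1⟩ := h
    push_neg at Hn1
    obtain ⟨v₀, hv₀⟩ := Hn1
    rw [capturedIn_one_iff] at hv₀
    push_neg at hv₀
    obtain ⟨p, q, hvp, hvq, hpq⟩ := hv₀
    obtain ⟨e₀, he₀, hstar⟩ := capturedIn_two_starAt (Hcap v₀) hvp
    revert he₀ hstar
    induction e₀ using Sym2.ind with
    | _ a b =>
    intro he₀ hstar
    have hab : G.Adj a b := (SimpleGraph.mem_edgeSet _).mp he₀
    by_cases hva : v₀ = a
    · subst hva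
      rcases caseA hp Hcap hpq hvp hvq hab hstar with h3 | h4
      · exact Or.inr (Or.inl h3)
      · exact Or.inr (Or.inr h4)
    · by_cases hvb : v₀ = b
      · subst hvb
        have hstar' : StarAt G v₀ s(v₀, a) := by rwa [Sym2.eq_swap]
        rcases caseA hp Hcap hpq hvp hvq hab.symm hstar' with h3 | h4
        · exact Or.inr (Or.inl h3)
        · exact Or.inr (Or.inr h4)
      · rcases caseB hp Hcap hpq hvp hvq hva hvb hab hstar with h3 | h4
        · exact Or.inl h3
        · exact Or.inr (Or.inr h4)
  · rintro (h | h | h) <;> obtain ⟨f⟩ := h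
    · rw [catNum_map f]; exact catNum_C3
    · rw [catNum_map f]; exact catNum_P3
    · rw [catNum_map f]; exact catNum_P4
end

section
/- The cycle C_5 has cat number 3, and moreover if G consists of C_5 together with any additional edge incident to the cycle, then cat(G) ≥ 4. -/
open SimpleGraph

universe u

section Helpers
variable {V : Type u} {G : SimpleGraph V} {v : V}

lemma not_captured_zero {x : V} (hx : G.Adj v x) : ¬ CapturedIn G v 0 := by
  intro h
  cases h with
  | isolated h => exact h x hx

lemma not_captured_succ {n : ℕ} {x : V} (hx : G.Adj v x)
    (h : ∀ e ∈ G.edgeSet, ∃ w, CatMove (G.deleteEdges {e}) v w ∧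
      ¬ CapturedIn (G.deleteEdges {e}) w n) :
    ¬ CapturedIn G v (n + 1) := by
  intro hc
  cases hc with
  | isolated hiso => exact hiso x hx
  | cut e he hall =>
      obtain ⟨w, hm, hnc⟩ := h e he
      exact hnc (hall w hm)

lemma sym2_ne_left {a b c d : V} (h1 : a ≠ c) (h2 : a ≠ d) : s(a,b) ≠ s(c,d) := by
  intro h
  have : a ∈ s(c,d) := h ▸ Sym2.mem_mk_left a b
  rcases Sym2.mem_iff.1 this with rfl | rfl
  · exact h1 rfl
  · exact h2 rfl

lemma sym2_ne_right {a b c d : V} (h1 : b ≠ c) (h2 : b ≠ d) : s(a,b) ≠ s(c,d) := by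
  intro h
  have : b ∈ s(c,d) := h ▸ Sym2.mem_mk_right a b
  rcases Sym2.mem_iff.1 this with rfl | rfl
  · exact h1 rfl
  · exact h2 rfl

lemma not_captured_one {a b : V} (hab : a ≠ b) (ha : G.Adj v a) (hb : G.Adj v b) :
    ¬ CapturedIn G v 1 := by
  refine not_captured_succ (n := 0) ha (fun e he => ?_)
  have key : s(v,a) ≠ e ∨ s(v,b) ≠ e := by
    by_contra hcon
    push_neg at hcon
    have : s(v,a) = s(v,b) := hcon.1.trans hcon.2.symm
    rw [Sym2.eq_iff] at this
    rcases this with ⟨-, rfl⟩ | ⟨rfl, rfl⟩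
    · exact hab rfl
    · exact hab rfl
  rcases key with hne | hne
  · have hadj : (G.deleteEdges {e}).Adj v a := by
      rw [SimpleGraph.deleteEdges_adj]; exact ⟨ha, by simpa using hne⟩
    exact ⟨a, ⟨ha.ne, hadj.reachable⟩, not_captured_zero hadj.symm⟩
  · have hadj : (G.deleteEdges {e}).Adj v b := by
      rw [SimpleGraph.deleteEdges_adj]; exact ⟨hb, by simpa using hne⟩
    exact ⟨b, ⟨hb.ne, hadj.reachable⟩, not_captured_zero hadj.symm⟩

lemma adj_del1 {a b : V} {e : Sym2 V} (h : G.Adj a b) (hne : s(a,b) ≠ e) :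
    (G.deleteEdges {e}).Adj a b := by
  rw [SimpleGraph.deleteEdges_adj]; exact ⟨h, by simpa using hne⟩

lemma leaf2 {H : SimpleGraph V} {v w a b : V} (hvw : v ≠ w) (hr : H.Reachable v w)
    (hab : a ≠ b) (ha : H.Adj w a) (hb : H.Adj w b) :
    ∃ w', CatMove H v w' ∧ ¬ CapturedIn H w' 1 :=
  ⟨w, ⟨hvw, hr⟩, not_captured_one hab ha hb⟩

end Helpers

lemma low_cycle {V : Type u} {G : SimpleGraph V} {c0 c1 c2 c3 c4 : V}
    (n01 : c0 ≠ c1) (n02 : c0 ≠ c2) (n03 : c0 ≠ c3) (n04 : c0 ≠ c4)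
    (n12 : c1 ≠ c2) (n13 : c1 ≠ c3) (n14 : c1 ≠ c4)
    (n23 : c2 ≠ c3) (n24 : c2 ≠ c4) (n34 : c3 ≠ c4)
    (hE : G.edgeSet = {s(c0,c1), s(c1,c2), s(c2,c3), s(c3,c4), s(c4,c0)}) :
    ¬ CapturedIn G c0 2 := by
  have hadj : ∀ x y : V, G.Adj x y ↔ (s(x,y) = s(c0,c1) ∨ s(x,y) = s(c1,c2) ∨
      s(x,y) = s(c2,c3) ∨ s(x,y) = s(c3,c4) ∨ s(x,y) = s(c4,c0)) := by
    intro x y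
    rw [← SimpleGraph.mem_edgeSet, hE]
    simp [Set.mem_insert_iff]
  have a01 : G.Adj c0 c1 := (hadj _ _).mpr (.inl rfl)
  have a12 : G.Adj c1 c2 := (hadj _ _).mpr (.inr (.inl rfl))
  have a23 : G.Adj c2 c3 := (hadj _ _).mpr (.inr (.inr (.inl rfl)))
  have a34 : G.Adj c3 c4 := (hadj _ _).mpr (.inr (.inr (.inr (.inl rfl))))
  have a40 : G.Adj c4 c0 := (hadj _ _).mpr (.inr (.inr (.inr (.inr rfl))))
  refine not_captured_succ (n := 1) a01 (fun e1 he1 => ?_)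
  rw [hE] at he1
  simp only [Set.mem_insert_iff, Set.mem_singleton_iff] at he1
  rcases he1 with rfl | rfl | rfl | rfl | rfl
  · -- cut s(c0,c1) : cat goes to c3 via c4; nbrs of c3: c2, c4
    have b23 := adj_del1 a23 (sym2_ne_left n02.symm n12.symm)
    have b34 := adj_del1 a34 (sym2_ne_left n03.symm n13.symm)
    have b40 := adj_del1 a40 (sym2_ne_left n04.symm n14.symm)
    exact leaf2 n03 (b40.symm.reachable.trans b34.symm.reachable) n24 b23.symm b34
  · -- cut s(c1,c2) : go to c4; nbrs c3, c0
    have b34 := adj_del1 a34 (sym2_ne_left n13.symm n23.symm)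
    have b40 := adj_del1 a40 (sym2_ne_left n14.symm n24.symm)
    exact leaf2 n04 b40.symm.reachable n03.symm b34.symm b40
  · -- cut s(c2,c3) : go to c1; nbrs c0, c2
    have b01 := adj_del1 a01 (sym2_ne_left n02 n03)
    have b12 := adj_del1 a12 (sym2_ne_left n12 n13)
    exact leaf2 n01 b01.reachable n02 b01.symm b12
  · -- cut s(c3,c4) : go to c1; nbrs c0, c2
    have b01 := adj_del1 a01 (sym2_ne_left n03 n04)
    have b12 := adj_del1 a12 (sym2_ne_left n13 n14)
    exact leaf2 n01 b01.reachable n02 b01.symm b12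
  · -- cut s(c4,c0) : go to c1; nbrs c0, c2
    have b01 := adj_del1 a01 (sym2_ne_right n14 n01.symm)
    have b12 := adj_del1 a12 (sym2_ne_left n14 n01.symm)
    exact leaf2 n01 b01.reachable n02 b01.symm b12

section MoreHelpers
variable {V : Type u} {G : SimpleGraph V}

lemma sym2_mem2 {x y a b : V} (h : s(x,y) = s(a,b)) : y = a ∨ y = b := by
  have : y ∈ s(a,b) := h ▸ Sym2.mem_mk_right x y
  exact Sym2.mem_iff.1 this

lemma sym2_eq_right {a b y : V} (hne : a ≠ b) (h : s(a,y) = s(a,b)) : y = b := by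
  rw [Sym2.eq_iff] at h
  rcases h with ⟨-, h⟩ | ⟨h', -⟩
  · exact h
  · exact absurd h' hne

lemma sym2_eq_right' {a b y : V} (hne : b ≠ a) (h : s(b,y) = s(a,b)) : y = a :=
  sym2_eq_right hne (h.trans Sym2.eq_swap)

lemma mem_of_walk {S : Set V} (hcl : ∀ x ∈ S, ∀ y, G.Adj x y → y ∈ S) :
    ∀ {u w : V}, u ∈ S → G.Walk u w → w ∈ S
  | _, _, hu, .nil => hu
  | _, _, hu, .cons h q => mem_of_walk hcl (hcl _ hu _ h) q

lemma mem_of_reachable {S : Set V} (hcl : ∀ x ∈ S, ∀ y, G.Adj x y → y ∈ S)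
    {u w : V} (hu : u ∈ S) (h : G.Reachable u w) : w ∈ S := by
  obtain ⟨p⟩ := h; exact mem_of_walk hcl hu p

end MoreHelpers

lemma cap_cycle {V : Type u} {G : SimpleGraph V} {c0 c1 c2 c3 c4 : V}
    (n01 : c0 ≠ c1) (n02 : c0 ≠ c2) (n03 : c0 ≠ c3) (n04 : c0 ≠ c4)
    (n12 : c1 ≠ c2) (n13 : c1 ≠ c3) (n14 : c1 ≠ c4)
    (n23 : c2 ≠ c3) (n24 : c2 ≠ c4) (n34 : c3 ≠ c4)
    (hadj : ∀ x y : V, G.Adj x y ↔ (s(x,y) = s(c0,c1) ∨ s(x,y) = s(c1,c2) ∨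
      s(x,y) = s(c2,c3) ∨ s(x,y) = s(c3,c4) ∨ s(x,y) = s(c4,c0))) :
    CapturedIn G c0 3 := by
  have a01 : G.Adj c0 c1 := (hadj _ _).mpr (.inl rfl)
  have a12 : G.Adj c1 c2 := (hadj _ _).mpr (.inr (.inl rfl))
  have a23 : G.Adj c2 c3 := (hadj _ _).mpr (.inr (.inr (.inl rfl)))
  have a34 : G.Adj c3 c4 := (hadj _ _).mpr (.inr (.inr (.inr (.inl rfl))))
  have a40 : G.Adj c4 c0 := (hadj _ _).mpr (.inr (.inr (.inr (.inr rfl))))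
  have hS : ∀ x y, G.Adj x y → y ∈ ({c0,c1,c2,c3,c4} : Set V) := by
    intro x y h
    rcases (hadj _ _).mp h with h | h | h | h | h <;>
      rcases sym2_mem2 h with rfl | rfl <;> simp
  show CapturedIn G c0 (2 + 1)
  refine CapturedIn.cut s(c2,c3) ((SimpleGraph.mem_edgeSet _).mpr a23) ?_
  intro w hw
  have hwS : w ∈ ({c0,c1,c2,c3,c4} : Set V) :=
    mem_of_reachable (fun x _ y hy => hS x y (SimpleGraph.deleteEdges_adj.mp hy).1)
      (by simp) hw.2
  simp only [Set.mem_insert_iff, Set.mem_singleton_iff] at hwS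
  rcases hwS with h | h | h | h | h <;> subst w
  · exact absurd rfl hw.1
  · -- w = c1 : cut s(c0,c1); confined to {c1,c2}; then cut s(c1,c2)
    show CapturedIn _ c1 (1 + 1)
    refine CapturedIn.cut s(c0,c1)
      ((SimpleGraph.mem_edgeSet _).mpr (adj_del1 a01 (sym2_ne_left n02 n03))) ?_
    intro w' hw'
    have conf : w' ∈ ({c1, c2} : Set V) := by
      refine mem_of_reachable ?_ (by simp) hw'.2
      intro x hx y hy
      obtain ⟨hy', h2m⟩ := SimpleGraph.deleteEdges_adj.mp hy
      obtain ⟨hG, h1m⟩ := SimpleGraph.deleteEdges_adj.mp hy'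
      have h1 : s(x,y) ≠ s(c2,c3) := by simpa using h1m
      have h2 : s(x,y) ≠ s(c0,c1) := by simpa using h2m
      simp only [Set.mem_insert_iff, Set.mem_singleton_iff] at hx
      rcases hx with rfl | rfl
      · rcases (hadj _ _).mp hG with h | h | h | h | h
        · exact absurd h h2
        · rcases sym2_eq_right n12 h with rfl; simp
        · exact absurd h (sym2_ne_left n12 n13)
        · exact absurd h (sym2_ne_left n13 n14)
        · exact absurd h (sym2_ne_left n14 n01.symm)
      · rcases (hadj _ _).mp hG with h | h | h | h | h
        · exact absurd h (sym2_ne_left n02.symm n12.symm)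
        · rcases sym2_eq_right' n12.symm h with rfl; simp
        · exact absurd h h1
        · exact absurd h (sym2_ne_left n23 n24)
        · exact absurd h (sym2_ne_left n24 n02.symm)
    simp only [Set.mem_insert_iff, Set.mem_singleton_iff] at conf
    rcases conf with h | h <;> subst w'
    · exact absurd rfl hw'.1
    · show CapturedIn _ c2 (0 + 1)
      refine CapturedIn.cut s(c1,c2)
        ((SimpleGraph.mem_edgeSet _).mpr (adj_del1
          (adj_del1 a12 (sym2_ne_left n12 n13)) (sym2_ne_right n02.symm n12.symm))) ?_
      intro w'' hw''
      have conf2 : w'' ∈ ({c2} : Set V) := by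
        refine mem_of_reachable ?_ (by simp) hw''.2
        intro x hx y hy
        obtain ⟨hy', h3m⟩ := SimpleGraph.deleteEdges_adj.mp hy
        obtain ⟨hy'', h2m⟩ := SimpleGraph.deleteEdges_adj.mp hy'
        obtain ⟨hG, h1m⟩ := SimpleGraph.deleteEdges_adj.mp hy''
        have h1 : s(x,y) ≠ s(c2,c3) := by simpa using h1m
        have h3 : s(x,y) ≠ s(c1,c2) := by simpa using h3m
        simp only [Set.mem_singleton_iff] at hx
        subst hx
        rcases (hadj _ _).mp hG with h | h | h | h | h
        · exact absurd h (sym2_ne_left n02.symm n12.symm)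
        · exact absurd h h3
        · exact absurd h h1
        · exact absurd h (sym2_ne_left n23 n24)
        · exact absurd h (sym2_ne_left n24 n02.symm)
      simp only [Set.mem_singleton_iff] at conf2
      exact absurd conf2.symm hw''.1
  · -- w = c2 : cut s(c1,c2); c2 isolated
    show CapturedIn _ c2 (1 + 1)
    refine CapturedIn.cut s(c1,c2)
      ((SimpleGraph.mem_edgeSet _).mpr (adj_del1 a12 (sym2_ne_left n12 n13))) ?_
    intro w' hw'
    have conf : w' ∈ ({c2} : Set V) := by
      refine mem_of_reachable ?_ (by simp) hw'.2
      intro x hx y hy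
      obtain ⟨hy', h2m⟩ := SimpleGraph.deleteEdges_adj.mp hy
      obtain ⟨hG, h1m⟩ := SimpleGraph.deleteEdges_adj.mp hy'
      have h1 : s(x,y) ≠ s(c2,c3) := by simpa using h1m
      have h2 : s(x,y) ≠ s(c1,c2) := by simpa using h2m
      simp only [Set.mem_singleton_iff] at hx
      subst hx
      rcases (hadj _ _).mp hG with h | h | h | h | h
      · exact absurd h (sym2_ne_left n02.symm n12.symm)
      · exact absurd h h2
      · exact absurd h h1
      · exact absurd h (sym2_ne_left n23 n24)
      · exact absurd h (sym2_ne_left n24 n02.symm)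
    simp only [Set.mem_singleton_iff] at conf
    exact absurd conf.symm hw'.1
  · -- w = c3 : cut s(c3,c4); c3 isolated
    show CapturedIn _ c3 (1 + 1)
    refine CapturedIn.cut s(c3,c4)
      ((SimpleGraph.mem_edgeSet _).mpr (adj_del1 a34 (sym2_ne_right n24.symm n34.symm))) ?_
    intro w' hw'
    have conf : w' ∈ ({c3} : Set V) := by
      refine mem_of_reachable ?_ (by simp) hw'.2
      intro x hx y hy
      obtain ⟨hy', h2m⟩ := SimpleGraph.deleteEdges_adj.mp hy
      obtain ⟨hG, h1m⟩ := SimpleGraph.deleteEdges_adj.mp hy'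
      have h1 : s(x,y) ≠ s(c2,c3) := by simpa using h1m
      have h2 : s(x,y) ≠ s(c3,c4) := by simpa using h2m
      simp only [Set.mem_singleton_iff] at hx
      subst hx
      rcases (hadj _ _).mp hG with h | h | h | h | h
      · exact absurd h (sym2_ne_left n03.symm n13.symm)
      · exact absurd h (sym2_ne_left n13.symm n23.symm)
      · exact absurd h h1
      · exact absurd h h2
      · exact absurd h (sym2_ne_left n34 n03.symm)
    simp only [Set.mem_singleton_iff] at conf
    exact absurd conf.symm hw'.1
  · -- w = c4 : cut s(c4,c0); confined to {c3,c4}; then cut s(c3,c4)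
    show CapturedIn _ c4 (1 + 1)
    refine CapturedIn.cut s(c4,c0)
      ((SimpleGraph.mem_edgeSet _).mpr (adj_del1 a40 (sym2_ne_left n24.symm n34.symm))) ?_
    intro w' hw'
    have conf : w' ∈ ({c3, c4} : Set V) := by
      refine mem_of_reachable ?_ (by simp) hw'.2
      intro x hx y hy
      obtain ⟨hy', h2m⟩ := SimpleGraph.deleteEdges_adj.mp hy
      obtain ⟨hG, h1m⟩ := SimpleGraph.deleteEdges_adj.mp hy'
      have h1 : s(x,y) ≠ s(c2,c3) := by simpa using h1m
      have h2 : s(x,y) ≠ s(c4,c0) := by simpa using h2m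
      simp only [Set.mem_insert_iff, Set.mem_singleton_iff] at hx
      rcases hx with rfl | rfl
      · rcases (hadj _ _).mp hG with h | h | h | h | h
        · exact absurd h (sym2_ne_left n03.symm n13.symm)
        · exact absurd h (sym2_ne_left n13.symm n23.symm)
        · exact absurd h h1
        · rcases sym2_eq_right n34 h with rfl; simp
        · exact absurd h (sym2_ne_left n34 n03.symm)
      · rcases (hadj _ _).mp hG with h | h | h | h | h
        · exact absurd h (sym2_ne_left n04.symm n14.symm)
        · exact absurd h (sym2_ne_left n14.symm n24.symm)
        · exact absurd h (sym2_ne_left n24.symm n34.symm)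
        · rcases sym2_eq_right' n34.symm h with rfl; simp
        · exact absurd h h2
    simp only [Set.mem_insert_iff, Set.mem_singleton_iff] at conf
    rcases conf with h | h <;> subst w'
    · show CapturedIn _ c3 (0 + 1)
      refine CapturedIn.cut s(c3,c4)
        ((SimpleGraph.mem_edgeSet _).mpr (adj_del1
          (adj_del1 a34 (sym2_ne_right n24.symm n34.symm))
          (sym2_ne_left n34 n03.symm))) ?_
      intro w'' hw''
      have conf2 : w'' ∈ ({c3} : Set V) := by
        refine mem_of_reachable ?_ (by simp) hw''.2
        intro x hx y hy
        obtain ⟨hy', h3m⟩ := SimpleGraph.deleteEdges_adj.mp hy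
        obtain ⟨hy'', h2m⟩ := SimpleGraph.deleteEdges_adj.mp hy'
        obtain ⟨hG, h1m⟩ := SimpleGraph.deleteEdges_adj.mp hy''
        have h1 : s(x,y) ≠ s(c2,c3) := by simpa using h1m
        have h3 : s(x,y) ≠ s(c3,c4) := by simpa using h3m
        simp only [Set.mem_singleton_iff] at hx
        subst hx
        rcases (hadj _ _).mp hG with h | h | h | h | h
        · exact absurd h (sym2_ne_left n03.symm n13.symm)
        · exact absurd h (sym2_ne_left n13.symm n23.symm)
        · exact absurd h h1
        · exact absurd h h3
        · exact absurd h (sym2_ne_left n34 n03.symm)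
      simp only [Set.mem_singleton_iff] at conf2
      exact absurd conf2.symm hw''.1
    · exact absurd rfl hw'.1
lemma adj_del2 {V : Type u} {G : SimpleGraph V} {a b : V} {e1 e2 : Sym2 V}
    (h : G.Adj a b) (h1 : s(a,b) ≠ e1) (h2 : s(a,b) ≠ e2) :
    ((G.deleteEdges {e1}).deleteEdges {e2}).Adj a b := adj_del1 (adj_del1 h h1) h2

lemma chord_lemma {V : Type u} {G : SimpleGraph V} {c0 c1 c2 c3 c4 : V}
    (n01 : c0 ≠ c1) (n02 : c0 ≠ c2) (n03 : c0 ≠ c3) (n04 : c0 ≠ c4)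
    (n12 : c1 ≠ c2) (n13 : c1 ≠ c3) (n14 : c1 ≠ c4)
    (n23 : c2 ≠ c3) (n24 : c2 ≠ c4) (n34 : c3 ≠ c4)
    (hE : G.edgeSet = {s(c0,c1), s(c1,c2), s(c2,c3), s(c3,c4), s(c4,c0), s(c0,c2)}) :
    ¬ CapturedIn G c1 3 := by
  have hadj : ∀ x y : V, G.Adj x y ↔ (s(x,y) = s(c0,c1) ∨ s(x,y) = s(c1,c2) ∨
      s(x,y) = s(c2,c3) ∨ s(x,y) = s(c3,c4) ∨ s(x,y) = s(c4,c0) ∨ s(x,y) = s(c0,c2)) := by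
    intro x y
    rw [← SimpleGraph.mem_edgeSet, hE]
    simp [Set.mem_insert_iff]
  have a01 : G.Adj c0 c1 := (hadj _ _).mpr (.inl rfl)
  have a12 : G.Adj c1 c2 := (hadj _ _).mpr (.inr (.inl rfl))
  have a23 : G.Adj c2 c3 := (hadj _ _).mpr (.inr (.inr (.inl rfl)))
  have a34 : G.Adj c3 c4 := (hadj _ _).mpr (.inr (.inr (.inr (.inl rfl))))
  have a40 : G.Adj c4 c0 := (hadj _ _).mpr (.inr (.inr (.inr (.inr (.inl rfl)))))
  have a02 : G.Adj c0 c2 := (hadj _ _).mpr (.inr (.inr (.inr (.inr (.inr rfl)))))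
  have q01_12 : s(c0,c1) ≠ s(c1,c2) := sym2_ne_left n01 n02
  have q01_23 : s(c0,c1) ≠ s(c2,c3) := sym2_ne_left n02 n03
  have q01_34 : s(c0,c1) ≠ s(c3,c4) := sym2_ne_left n03 n04
  have q01_40 : s(c0,c1) ≠ s(c4,c0) := sym2_ne_right n14 n01.symm
  have q01_02 : s(c0,c1) ≠ s(c0,c2) := sym2_ne_right n01.symm n12
  have q12_23 : s(c1,c2) ≠ s(c2,c3) := sym2_ne_left n12 n13
  have q12_34 : s(c1,c2) ≠ s(c3,c4) := sym2_ne_left n13 n14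
  have q12_40 : s(c1,c2) ≠ s(c4,c0) := sym2_ne_left n14 n01.symm
  have q12_02 : s(c1,c2) ≠ s(c0,c2) := sym2_ne_left n01.symm n12
  have q23_34 : s(c2,c3) ≠ s(c3,c4) := sym2_ne_left n23 n24
  have q23_40 : s(c2,c3) ≠ s(c4,c0) := sym2_ne_left n24 n02.symm
  have q23_02 : s(c2,c3) ≠ s(c0,c2) := sym2_ne_right n03.symm n23.symm
  have q34_40 : s(c3,c4) ≠ s(c4,c0) := sym2_ne_left n34 n03.symm
  have q34_02 : s(c3,c4) ≠ s(c0,c2) := sym2_ne_left n03.symm n23.symm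
  have q40_02 : s(c4,c0) ≠ s(c0,c2) := sym2_ne_left n04.symm n24.symm
  refine not_captured_succ (n := 2) a12 (fun e1 he1 => ?_)
  rw [hE] at he1
  simp only [Set.mem_insert_iff, Set.mem_singleton_iff] at he1
  rcases he1 with rfl | rfl | rfl | rfl | rfl | rfl
  · -- e1 = s(c0,c1); cat to c3
    have b12 := adj_del1 a12 q01_12.symm
    have b23 := adj_del1 a23 q01_23.symm
    refine ⟨c3, ⟨n13, b12.reachable.trans b23.reachable⟩, ?_⟩
    refine not_captured_succ (n := 1) b23.symm (fun e2 he2 => ?_)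
    rw [SimpleGraph.edgeSet_deleteEdges, hE] at he2
    obtain ⟨hm, hd⟩ := he2
    simp only [Set.mem_insert_iff, Set.mem_singleton_iff] at hm
    rcases hm with rfl | rfl | rfl | rfl | rfl | rfl
    · exact (hd rfl).elim
    · exact leaf2 n34 (adj_del2 a34 q01_34.symm q12_34.symm).reachable n03.symm
        (adj_del2 a34 q01_34.symm q12_34.symm).symm (adj_del2 a40 q01_40.symm q12_40.symm)
    · exact leaf2 n34 (adj_del2 a34 q01_34.symm q23_34.symm).reachable n03.symm
        (adj_del2 a34 q01_34.symm q23_34.symm).symm (adj_del2 a40 q01_40.symm q23_40.symm)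
    · exact leaf2 n23.symm (adj_del2 a23 q01_23.symm q23_34).symm.reachable n01.symm
        (adj_del2 a12 q01_12.symm q12_34).symm (adj_del2 a02 q01_02.symm q34_02.symm).symm
    · exact leaf2 n23.symm (adj_del2 a23 q01_23.symm q23_40).symm.reachable n01.symm
        (adj_del2 a12 q01_12.symm q12_40).symm (adj_del2 a02 q01_02.symm q40_02.symm).symm
    · exact leaf2 n23.symm (adj_del2 a23 q01_23.symm q23_02).symm.reachable n13
        (adj_del2 a12 q01_12.symm q12_02).symm (adj_del2 a23 q01_23.symm q23_02)
  · -- e1 = s(c1,c2); cat to c3 via c0, c2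
    have b01 := adj_del1 a01 q01_12
    have b02 := adj_del1 a02 q12_02.symm
    have b23 := adj_del1 a23 q12_23.symm
    refine ⟨c3, ⟨n13, (b01.symm.reachable.trans b02.reachable).trans b23.reachable⟩, ?_⟩
    refine not_captured_succ (n := 1) b23.symm (fun e2 he2 => ?_)
    rw [SimpleGraph.edgeSet_deleteEdges, hE] at he2
    obtain ⟨hm, hd⟩ := he2
    simp only [Set.mem_insert_iff, Set.mem_singleton_iff] at hm
    rcases hm with rfl | rfl | rfl | rfl | rfl | rfl
    · exact leaf2 n34 (adj_del2 a34 q12_34.symm q01_34.symm).reachable n03.symm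
        (adj_del2 a34 q12_34.symm q01_34.symm).symm (adj_del2 a40 q12_40.symm q01_40.symm)
    · exact (hd rfl).elim
    · exact leaf2 n34 (adj_del2 a34 q12_34.symm q23_34.symm).reachable n03.symm
        (adj_del2 a34 q12_34.symm q23_34.symm).symm (adj_del2 a40 q12_40.symm q23_40.symm)
    · exact leaf2 n23.symm (adj_del2 a23 q12_23.symm q23_34).symm.reachable n03.symm
        (adj_del2 a23 q12_23.symm q23_34) (adj_del2 a02 q12_02.symm q34_02.symm).symm
    · exact leaf2 n23.symm (adj_del2 a23 q12_23.symm q23_40).symm.reachable n03.symm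
        (adj_del2 a23 q12_23.symm q23_40) (adj_del2 a02 q12_02.symm q40_02.symm).symm
    · exact leaf2 n34 (adj_del2 a34 q12_34.symm q34_02).reachable n03.symm
        (adj_del2 a34 q12_34.symm q34_02).symm (adj_del2 a40 q12_40.symm q40_02)
  · -- e1 = s(c2,c3); cat to c0
    have b01 := adj_del1 a01 q01_23
    refine ⟨c0, ⟨n01.symm, b01.symm.reachable⟩, ?_⟩
    refine not_captured_succ (n := 1) b01 (fun e2 he2 => ?_)
    rw [SimpleGraph.edgeSet_deleteEdges, hE] at he2
    obtain ⟨hm, hd⟩ := he2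
    simp only [Set.mem_insert_iff, Set.mem_singleton_iff] at hm
    rcases hm with rfl | rfl | rfl | rfl | rfl | rfl
    · exact leaf2 n02 (adj_del2 a02 q23_02.symm q01_02.symm).reachable n01.symm
        (adj_del2 a12 q12_23 q01_12.symm).symm (adj_del2 a02 q23_02.symm q01_02.symm).symm
    · exact leaf2 n04 (adj_del2 a40 q23_40.symm q12_40.symm).symm.reachable n03.symm
        (adj_del2 a34 q23_34.symm q12_34.symm).symm (adj_del2 a40 q23_40.symm q12_40.symm)
    · exact (hd rfl).elim
    · exact leaf2 n02 (adj_del2 a02 q23_02.symm q34_02.symm).reachable n01.symm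
        (adj_del2 a12 q12_23 q12_34).symm (adj_del2 a02 q23_02.symm q34_02.symm).symm
    · exact leaf2 n02 (adj_del2 a02 q23_02.symm q40_02.symm).reachable n01.symm
        (adj_del2 a12 q12_23 q12_40).symm (adj_del2 a02 q23_02.symm q40_02.symm).symm
    · exact leaf2 n01 (adj_del2 a01 q01_23 q01_02).reachable n02
        (adj_del2 a01 q01_23 q01_02).symm (adj_del2 a12 q12_23 q12_02)
  · -- e1 = s(c3,c4); cat to c0
    have b01 := adj_del1 a01 q01_34
    refine ⟨c0, ⟨n01.symm, b01.symm.reachable⟩, ?_⟩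
    refine not_captured_succ (n := 1) b01 (fun e2 he2 => ?_)
    rw [SimpleGraph.edgeSet_deleteEdges, hE] at he2
    obtain ⟨hm, hd⟩ := he2
    simp only [Set.mem_insert_iff, Set.mem_singleton_iff] at hm
    rcases hm with rfl | rfl | rfl | rfl | rfl | rfl
    · exact leaf2 n02 (adj_del2 a02 q34_02.symm q01_02.symm).reachable n13
        (adj_del2 a12 q12_34 q01_12.symm).symm (adj_del2 a23 q23_34 q01_23.symm)
    · exact leaf2 n02 (adj_del2 a02 q34_02.symm q12_02.symm).reachable n03.symm
        (adj_del2 a23 q23_34 q12_23.symm) (adj_del2 a02 q34_02.symm q12_02.symm).symm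
    · exact leaf2 n02 (adj_del2 a02 q34_02.symm q23_02.symm).reachable n01.symm
        (adj_del2 a12 q12_34 q12_23).symm (adj_del2 a02 q34_02.symm q23_02.symm).symm
    · exact (hd rfl).elim
    · exact leaf2 n02 (adj_del2 a02 q34_02.symm q40_02.symm).reachable n13
        (adj_del2 a12 q12_34 q12_40).symm (adj_del2 a23 q23_34 q23_40)
    · exact leaf2 n01 (adj_del2 a01 q01_34 q01_02).reachable n02
        (adj_del2 a01 q01_34 q01_02).symm (adj_del2 a12 q12_34 q12_02)
  · -- e1 = s(c4,c0); cat to c2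
    have b12 := adj_del1 a12 q12_40
    refine ⟨c2, ⟨n12, b12.reachable⟩, ?_⟩
    refine not_captured_succ (n := 1) b12.symm (fun e2 he2 => ?_)
    rw [SimpleGraph.edgeSet_deleteEdges, hE] at he2
    obtain ⟨hm, hd⟩ := he2
    simp only [Set.mem_insert_iff, Set.mem_singleton_iff] at hm
    rcases hm with rfl | rfl | rfl | rfl | rfl | rfl
    · exact leaf2 n23 (adj_del2 a23 q23_40 q01_23.symm).reachable n24
        (adj_del2 a23 q23_40 q01_23.symm).symm (adj_del2 a34 q34_40 q01_34.symm)
    · exact leaf2 n02.symm (adj_del2 a02 q40_02.symm q12_02.symm).symm.reachable n12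
        (adj_del2 a01 q01_40 q01_12) (adj_del2 a02 q40_02.symm q12_02.symm)
    · exact leaf2 n02.symm (adj_del2 a02 q40_02.symm q23_02.symm).symm.reachable n12
        (adj_del2 a01 q01_40 q01_23) (adj_del2 a02 q40_02.symm q23_02.symm)
    · exact leaf2 n12.symm (adj_del2 a12 q12_40 q12_34).symm.reachable n02
        (adj_del2 a01 q01_40 q01_34).symm (adj_del2 a12 q12_40 q12_34)
    · exact (hd rfl).elim
    · exact leaf2 n12.symm (adj_del2 a12 q12_40 q12_02).symm.reachable n02
        (adj_del2 a01 q01_40 q01_02).symm (adj_del2 a12 q12_40 q12_02)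
  · -- e1 = s(c0,c2); cat to c3
    have b12 := adj_del1 a12 q12_02
    have b23 := adj_del1 a23 q23_02
    refine ⟨c3, ⟨n13, b12.reachable.trans b23.reachable⟩, ?_⟩
    refine not_captured_succ (n := 1) b23.symm (fun e2 he2 => ?_)
    rw [SimpleGraph.edgeSet_deleteEdges, hE] at he2
    obtain ⟨hm, hd⟩ := he2
    simp only [Set.mem_insert_iff, Set.mem_singleton_iff] at hm
    rcases hm with rfl | rfl | rfl | rfl | rfl | rfl
    · exact leaf2 n23.symm (adj_del2 a23 q23_02 q01_23.symm).symm.reachable n13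
        (adj_del2 a12 q12_02 q01_12.symm).symm (adj_del2 a23 q23_02 q01_23.symm)
    · exact leaf2 n34 (adj_del2 a34 q34_02 q12_34.symm).reachable n03.symm
        (adj_del2 a34 q34_02 q12_34.symm).symm (adj_del2 a40 q40_02 q12_40.symm)
    · exact leaf2 n34 (adj_del2 a34 q34_02 q23_34.symm).reachable n03.symm
        (adj_del2 a34 q34_02 q23_34.symm).symm (adj_del2 a40 q40_02 q23_40.symm)
    · exact leaf2 n23.symm (adj_del2 a23 q23_02 q23_34).symm.reachable n13
        (adj_del2 a12 q12_02 q12_34).symm (adj_del2 a23 q23_02 q23_34)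
    · exact leaf2 n23.symm (adj_del2 a23 q23_02 q23_40).symm.reachable n13
        (adj_del2 a12 q12_02 q12_40).symm (adj_del2 a23 q23_02 q23_40)
    · exact (hd rfl).elim

lemma pendant_lemma {V : Type u} {G : SimpleGraph V} {c0 c1 c2 c3 c4 y : V}
    (n01 : c0 ≠ c1) (n02 : c0 ≠ c2) (n03 : c0 ≠ c3) (n04 : c0 ≠ c4)
    (n12 : c1 ≠ c2) (n13 : c1 ≠ c3) (n14 : c1 ≠ c4)
    (n23 : c2 ≠ c3) (n24 : c2 ≠ c4) (n34 : c3 ≠ c4)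
    (ny0 : c0 ≠ y) (ny1 : c1 ≠ y) (ny2 : c2 ≠ y) (ny3 : c3 ≠ y) (ny4 : c4 ≠ y)
    (hE : G.edgeSet = {s(c0,c1), s(c1,c2), s(c2,c3), s(c3,c4), s(c4,c0), s(c0,y)}) :
    ¬ CapturedIn G c2 3 := by
  have hadj : ∀ x z : V, G.Adj x z ↔ (s(x,z) = s(c0,c1) ∨ s(x,z) = s(c1,c2) ∨
      s(x,z) = s(c2,c3) ∨ s(x,z) = s(c3,c4) ∨ s(x,z) = s(c4,c0) ∨ s(x,z) = s(c0,y)) := by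
    intro x z
    rw [← SimpleGraph.mem_edgeSet, hE]
    simp [Set.mem_insert_iff]
  have a01 : G.Adj c0 c1 := (hadj _ _).mpr (.inl rfl)
  have a12 : G.Adj c1 c2 := (hadj _ _).mpr (.inr (.inl rfl))
  have a23 : G.Adj c2 c3 := (hadj _ _).mpr (.inr (.inr (.inl rfl)))
  have a34 : G.Adj c3 c4 := (hadj _ _).mpr (.inr (.inr (.inr (.inl rfl))))
  have a40 : G.Adj c4 c0 := (hadj _ _).mpr (.inr (.inr (.inr (.inr (.inl rfl)))))
  have a0y : G.Adj c0 y := (hadj _ _).mpr (.inr (.inr (.inr (.inr (.inr rfl)))))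
  have q01_12 : s(c0,c1) ≠ s(c1,c2) := sym2_ne_left n01 n02
  have q01_23 : s(c0,c1) ≠ s(c2,c3) := sym2_ne_left n02 n03
  have q01_34 : s(c0,c1) ≠ s(c3,c4) := sym2_ne_left n03 n04
  have q01_40 : s(c0,c1) ≠ s(c4,c0) := sym2_ne_right n14 n01.symm
  have q01_0y : s(c0,c1) ≠ s(c0,y) := sym2_ne_right n01.symm ny1
  have q12_23 : s(c1,c2) ≠ s(c2,c3) := sym2_ne_left n12 n13
  have q12_34 : s(c1,c2) ≠ s(c3,c4) := sym2_ne_left n13 n14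
  have q12_40 : s(c1,c2) ≠ s(c4,c0) := sym2_ne_left n14 n01.symm
  have q12_0y : s(c1,c2) ≠ s(c0,y) := sym2_ne_left n01.symm ny1
  have q23_34 : s(c2,c3) ≠ s(c3,c4) := sym2_ne_left n23 n24
  have q23_40 : s(c2,c3) ≠ s(c4,c0) := sym2_ne_left n24 n02.symm
  have q23_0y : s(c2,c3) ≠ s(c0,y) := sym2_ne_left n02.symm ny2
  have q34_40 : s(c3,c4) ≠ s(c4,c0) := sym2_ne_left n34 n03.symm
  have q34_0y : s(c3,c4) ≠ s(c0,y) := sym2_ne_left n03.symm ny3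
  have q40_0y : s(c4,c0) ≠ s(c0,y) := sym2_ne_left n04.symm ny4
  refine not_captured_succ (n := 2) a23 (fun e1 he1 => ?_)
  rw [hE] at he1
  simp only [Set.mem_insert_iff, Set.mem_singleton_iff] at he1
  rcases he1 with rfl | rfl | rfl | rfl | rfl | rfl
  · -- e1 = s(c0,c1); cat to c4 via c3
    have b23 := adj_del1 a23 q01_23.symm
    have b34 := adj_del1 a34 q01_34.symm
    refine ⟨c4, ⟨n24, b23.reachable.trans b34.reachable⟩, ?_⟩
    refine not_captured_succ (n := 1) b34.symm (fun e2 he2 => ?_)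
    rw [SimpleGraph.edgeSet_deleteEdges, hE] at he2
    obtain ⟨hm, hd⟩ := he2
    simp only [Set.mem_insert_iff, Set.mem_singleton_iff] at hm
    rcases hm with rfl | rfl | rfl | rfl | rfl | rfl
    · exact (hd rfl).elim
    · exact leaf2 n04.symm (adj_del2 a40 q01_40.symm q12_40.symm).reachable ny4
        (adj_del2 a40 q01_40.symm q12_40.symm).symm (adj_del2 a0y q01_0y.symm q12_0y.symm)
    · exact leaf2 n04.symm (adj_del2 a40 q01_40.symm q23_40.symm).reachable ny4
        (adj_del2 a40 q01_40.symm q23_40.symm).symm (adj_del2 a0y q01_0y.symm q23_0y.symm)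
    · exact leaf2 n04.symm (adj_del2 a40 q01_40.symm q34_40.symm).reachable ny4
        (adj_del2 a40 q01_40.symm q34_40.symm).symm (adj_del2 a0y q01_0y.symm q34_0y.symm)
    · exact leaf2 n34.symm (adj_del2 a34 q01_34.symm q34_40).symm.reachable n24
        (adj_del2 a23 q01_23.symm q23_40).symm (adj_del2 a34 q01_34.symm q34_40)
    · exact leaf2 n34.symm (adj_del2 a34 q01_34.symm q34_0y).symm.reachable n24
        (adj_del2 a23 q01_23.symm q23_0y).symm (adj_del2 a34 q01_34.symm q34_0y)
  · -- e1 = s(c1,c2); cat to c4 via c3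
    have b23 := adj_del1 a23 q12_23.symm
    have b34 := adj_del1 a34 q12_34.symm
    refine ⟨c4, ⟨n24, b23.reachable.trans b34.reachable⟩, ?_⟩
    refine not_captured_succ (n := 1) b34.symm (fun e2 he2 => ?_)
    rw [SimpleGraph.edgeSet_deleteEdges, hE] at he2
    obtain ⟨hm, hd⟩ := he2
    simp only [Set.mem_insert_iff, Set.mem_singleton_iff] at hm
    rcases hm with rfl | rfl | rfl | rfl | rfl | rfl
    · exact leaf2 n04.symm (adj_del2 a40 q12_40.symm q01_40.symm).reachable ny4
        (adj_del2 a40 q12_40.symm q01_40.symm).symm (adj_del2 a0y q12_0y.symm q01_0y.symm)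
    · exact (hd rfl).elim
    · exact leaf2 n04.symm (adj_del2 a40 q12_40.symm q23_40.symm).reachable ny1
        (adj_del2 a01 q01_12 q01_23) (adj_del2 a0y q12_0y.symm q23_0y.symm)
    · exact leaf2 n04.symm (adj_del2 a40 q12_40.symm q34_40.symm).reachable ny1
        (adj_del2 a01 q01_12 q01_34) (adj_del2 a0y q12_0y.symm q34_0y.symm)
    · exact leaf2 n34.symm (adj_del2 a34 q12_34.symm q34_40).symm.reachable n24
        (adj_del2 a23 q12_23.symm q23_40).symm (adj_del2 a34 q12_34.symm q34_40)
    · exact leaf2 n04.symm (adj_del2 a40 q12_40.symm q40_0y).reachable n14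
        (adj_del2 a01 q01_12 q01_0y) (adj_del2 a40 q12_40.symm q40_0y).symm
  · -- e1 = s(c2,c3); cat to c0 via c1
    have b12 := adj_del1 a12 q12_23
    have b01 := adj_del1 a01 q01_23
    refine ⟨c0, ⟨n02.symm, b12.symm.reachable.trans b01.symm.reachable⟩, ?_⟩
    refine not_captured_succ (n := 1) b01 (fun e2 he2 => ?_)
    rw [SimpleGraph.edgeSet_deleteEdges, hE] at he2
    obtain ⟨hm, hd⟩ := he2
    simp only [Set.mem_insert_iff, Set.mem_singleton_iff] at hm
    rcases hm with rfl | rfl | rfl | rfl | rfl | rfl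
    · exact leaf2 n04 (adj_del2 a40 q23_40.symm q01_40.symm).symm.reachable n03.symm
        (adj_del2 a34 q23_34.symm q01_34.symm).symm (adj_del2 a40 q23_40.symm q01_40.symm)
    · exact leaf2 n04 (adj_del2 a40 q23_40.symm q12_40.symm).symm.reachable n03.symm
        (adj_del2 a34 q23_34.symm q12_34.symm).symm (adj_del2 a40 q23_40.symm q12_40.symm)
    · exact (hd rfl).elim
    · exact leaf2 n01 (adj_del2 a01 q01_23 q01_34).reachable n02
        (adj_del2 a01 q01_23 q01_34).symm (adj_del2 a12 q12_23 q12_34)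
    · exact leaf2 n01 (adj_del2 a01 q01_23 q01_40).reachable n02
        (adj_del2 a01 q01_23 q01_40).symm (adj_del2 a12 q12_23 q12_40)
    · exact leaf2 n01 (adj_del2 a01 q01_23 q01_0y).reachable n02
        (adj_del2 a01 q01_23 q01_0y).symm (adj_del2 a12 q12_23 q12_0y)
  · -- e1 = s(c3,c4); cat to c1
    have b12 := adj_del1 a12 q12_34
    refine ⟨c1, ⟨n12.symm, b12.symm.reachable⟩, ?_⟩
    refine not_captured_succ (n := 1) b12 (fun e2 he2 => ?_)
    rw [SimpleGraph.edgeSet_deleteEdges, hE] at he2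
    obtain ⟨hm, hd⟩ := he2
    simp only [Set.mem_insert_iff, Set.mem_singleton_iff] at hm
    rcases hm with rfl | rfl | rfl | rfl | rfl | rfl
    · exact leaf2 n12 (adj_del2 a12 q12_34 q01_12.symm).reachable n13
        (adj_del2 a12 q12_34 q01_12.symm).symm (adj_del2 a23 q23_34 q01_23.symm)
    · exact leaf2 n01.symm (adj_del2 a01 q01_34 q01_12).symm.reachable ny1
        (adj_del2 a01 q01_34 q01_12) (adj_del2 a0y q34_0y.symm q12_0y.symm)
    · exact leaf2 n01.symm (adj_del2 a01 q01_34 q01_23).symm.reachable ny4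
        (adj_del2 a40 q34_40.symm q23_40.symm).symm (adj_del2 a0y q34_0y.symm q23_0y.symm)
    · exact (hd rfl).elim
    · exact leaf2 n12 (adj_del2 a12 q12_34 q12_40).reachable n13
        (adj_del2 a12 q12_34 q12_40).symm (adj_del2 a23 q23_34 q23_40)
    · exact leaf2 n12 (adj_del2 a12 q12_34 q12_0y).reachable n13
        (adj_del2 a12 q12_34 q12_0y).symm (adj_del2 a23 q23_34 q23_0y)
  · -- e1 = s(c4,c0); cat to c1
    have b12 := adj_del1 a12 q12_40
    refine ⟨c1, ⟨n12.symm, b12.symm.reachable⟩, ?_⟩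
    refine not_captured_succ (n := 1) b12 (fun e2 he2 => ?_)
    rw [SimpleGraph.edgeSet_deleteEdges, hE] at he2
    obtain ⟨hm, hd⟩ := he2
    simp only [Set.mem_insert_iff, Set.mem_singleton_iff] at hm
    rcases hm with rfl | rfl | rfl | rfl | rfl | rfl
    · exact leaf2 n12 (adj_del2 a12 q12_40 q01_12.symm).reachable n13
        (adj_del2 a12 q12_40 q01_12.symm).symm (adj_del2 a23 q23_40 q01_23.symm)
    · exact leaf2 n01.symm (adj_del2 a01 q01_40 q01_12).symm.reachable ny1
        (adj_del2 a01 q01_40 q01_12) (adj_del2 a0y q40_0y.symm q12_0y.symm)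
    · exact leaf2 n01.symm (adj_del2 a01 q01_40 q01_23).symm.reachable ny1
        (adj_del2 a01 q01_40 q01_23) (adj_del2 a0y q40_0y.symm q23_0y.symm)
    · exact leaf2 n12 (adj_del2 a12 q12_40 q12_34).reachable n13
        (adj_del2 a12 q12_40 q12_34).symm (adj_del2 a23 q23_40 q23_34)
    · exact (hd rfl).elim
    · exact leaf2 n12 (adj_del2 a12 q12_40 q12_0y).reachable n13
        (adj_del2 a12 q12_40 q12_0y).symm (adj_del2 a23 q23_40 q23_0y)
  · -- e1 = s(c0,y); cat to c0 via c1
    have b12 := adj_del1 a12 q12_0y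
    have b01 := adj_del1 a01 q01_0y
    refine ⟨c0, ⟨n02.symm, b12.symm.reachable.trans b01.symm.reachable⟩, ?_⟩
    refine not_captured_succ (n := 1) b01 (fun e2 he2 => ?_)
    rw [SimpleGraph.edgeSet_deleteEdges, hE] at he2
    obtain ⟨hm, hd⟩ := he2
    simp only [Set.mem_insert_iff, Set.mem_singleton_iff] at hm
    rcases hm with rfl | rfl | rfl | rfl | rfl | rfl
    · exact leaf2 n04 (adj_del2 a40 q40_0y q01_40.symm).symm.reachable n03.symm
        (adj_del2 a34 q34_0y q01_34.symm).symm (adj_del2 a40 q40_0y q01_40.symm)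
    · exact leaf2 n04 (adj_del2 a40 q40_0y q12_40.symm).symm.reachable n03.symm
        (adj_del2 a34 q34_0y q12_34.symm).symm (adj_del2 a40 q40_0y q12_40.symm)
    · exact leaf2 n01 (adj_del2 a01 q01_0y q01_23).reachable n02
        (adj_del2 a01 q01_0y q01_23).symm (adj_del2 a12 q12_0y q12_23)
    · exact leaf2 n01 (adj_del2 a01 q01_0y q01_34).reachable n02
        (adj_del2 a01 q01_0y q01_34).symm (adj_del2 a12 q12_0y q12_34)
    · exact leaf2 n01 (adj_del2 a01 q01_0y q01_40).reachable n02
        (adj_del2 a01 q01_0y q01_40).symm (adj_del2 a12 q12_0y q12_40)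
    · exact (hd rfl).elim

lemma captured_mono {V : Type u} {G : SimpleGraph V} {v : V} {m n : ℕ}
    (h : CapturedIn G v m) (hmn : m ≤ n) : CapturedIn G v n := by
  induction h generalizing n with
  | isolated h => exact CapturedIn.isolated h
  | cut e he hall ih =>
      obtain ⟨n', rfl⟩ : ∃ n', n = n' + 1 :=
        Nat.exists_eq_add_of_le' (le_trans (Nat.succ_le_succ (Nat.zero_le _)) hmn)
      exact CapturedIn.cut e he fun w hw => ih w hw (Nat.succ_le_succ_iff.mp hmn)

lemma catNum_ge_four {V : Type u} {G : SimpleGraph V} (h : ∃ v, ¬ CapturedIn G v 3) :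
    4 ≤ catNum G := by
  obtain ⟨v, hv⟩ := h
  refine le_trans ?_ (le_iSup _ v)
  refine le_sInf fun b hb => ?_
  obtain ⟨m, hm, rfl⟩ := hb
  have h4 : 4 ≤ m := by
    by_contra hcon
    exact hv (captured_mono hm (by omega))
  exact_mod_cast h4

lemma key_lemma {V : Type u} {G : SimpleGraph V} {c0 c1 c2 c3 c4 w : V}
    (n01 : c0 ≠ c1) (n02 : c0 ≠ c2) (n03 : c0 ≠ c3) (n04 : c0 ≠ c4)
    (n12 : c1 ≠ c2) (n13 : c1 ≠ c3) (n14 : c1 ≠ c4)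
    (n23 : c2 ≠ c3) (n24 : c2 ≠ c4) (n34 : c3 ≠ c4)
    (hne : s(c0,w) ∉ ({s(c0,c1), s(c1,c2), s(c2,c3), s(c3,c4), s(c4,c0)} : Set (Sym2 V)))
    (hE : G.edgeSet = {s(c0,c1), s(c1,c2), s(c2,c3), s(c3,c4), s(c4,c0), s(c0,w)}) :
    ∃ v, ¬ CapturedIn G v 3 := by
  have haw : G.Adj c0 w := (SimpleGraph.mem_edgeSet _).mp (by rw [hE]; simp)
  have hw0 : c0 ≠ w := haw.ne
  by_cases h1 : w = c1
  · rw [h1] at hne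
    exact absurd (by simp) hne
  by_cases h4 : w = c4
  · rw [h4] at hne
    refine absurd ?_ hne
    simp only [Set.mem_insert_iff, Set.mem_singleton_iff]
    exact .inr (.inr (.inr (.inr Sym2.eq_swap)))
  by_cases h2 : w = c2
  · rw [h2] at hE
    exact ⟨c1, chord_lemma n01 n02 n03 n04 n12 n13 n14 n23 n24 n34 hE⟩
  by_cases h3 : w = c3
  · rw [h3] at hE
    refine ⟨c4, chord_lemma n04 n03 n02 n01 n34.symm n24.symm n14.symm n23.symm
      n13.symm n12.symm ?_⟩
    rw [hE]
    have e1 : s(c0,c4) = s(c4,c0) := Sym2.eq_swap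
    have e2 : s(c4,c3) = s(c3,c4) := Sym2.eq_swap
    have e3 : s(c3,c2) = s(c2,c3) := Sym2.eq_swap
    have e4 : s(c2,c1) = s(c1,c2) := Sym2.eq_swap
    have e5 : s(c1,c0) = s(c0,c1) := Sym2.eq_swap
    rw [e1, e2, e3, e4, e5]
    ext f
    simp only [Set.mem_insert_iff, Set.mem_singleton_iff]
    tauto
  · exact ⟨c2, pendant_lemma n01 n02 n03 n04 n12 n13 n14 n23 n24 n34
      hw0 (fun h => h1 h.symm) (fun h => h2 h.symm) (fun h => h3 h.symm)
      (fun h => h4 h.symm) hE⟩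

set_option maxHeartbeats 1000000 in
lemma from_cycle_plus_edge {V : Type u} {G : SimpleGraph V} {b0 b1 b2 b3 b4 u w : V}
    (n01 : b0 ≠ b1) (n02 : b0 ≠ b2) (n03 : b0 ≠ b3) (n04 : b0 ≠ b4)
    (n12 : b1 ≠ b2) (n13 : b1 ≠ b3) (n14 : b1 ≠ b4)
    (n23 : b2 ≠ b3) (n24 : b2 ≠ b4) (n34 : b3 ≠ b4)
    (hu : u = b0 ∨ u = b1 ∨ u = b2 ∨ u = b3 ∨ u = b4)
    (hne : s(u,w) ∉ ({s(b0,b1), s(b1,b2), s(b2,b3), s(b3,b4), s(b4,b0)} : Set (Sym2 V)))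
    (hE : G.edgeSet = {s(b0,b1), s(b1,b2), s(b2,b3), s(b3,b4), s(b4,b0), s(u,w)}) :
    ∃ v, ¬ CapturedIn G v 3 := by
  simp only [Set.mem_insert_iff, Set.mem_singleton_iff] at hne
  rcases hu with h | h | h | h | h <;> rw [h] at hne hE
  · refine key_lemma n01 n02 n03 n04 n12 n13 n14 n23 n24 n34 ?_ hE
    simp only [Set.mem_insert_iff, Set.mem_singleton_iff]; tauto
  · refine key_lemma (w := w) n12 n13 n14 n01.symm n23 n24 n02.symm n34 n03.symm n04.symm ?_ ?_
    · simp only [Set.mem_insert_iff, Set.mem_singleton_iff]; tauto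
    · rw [hE]; ext f
      simp only [Set.mem_insert_iff, Set.mem_singleton_iff]; tauto
  · refine key_lemma (w := w) n23 n24 n02.symm n12.symm n34 n03.symm n13.symm n04.symm
      n14.symm n01 ?_ ?_
    · simp only [Set.mem_insert_iff, Set.mem_singleton_iff]; tauto
    · rw [hE]; ext f
      simp only [Set.mem_insert_iff, Set.mem_singleton_iff]; tauto
  · refine key_lemma (w := w) n34 n03.symm n13.symm n23.symm n04.symm n14.symm n24.symm
      n01 n02 n12 ?_ ?_
    · simp only [Set.mem_insert_iff, Set.mem_singleton_iff]; tauto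
    · rw [hE]; ext f
      simp only [Set.mem_insert_iff, Set.mem_singleton_iff]; tauto
  · refine key_lemma (w := w) n04.symm n14.symm n24.symm n34.symm n01 n02 n03 n12 n13 n23 ?_ ?_
    · simp only [Set.mem_insert_iff, Set.mem_singleton_iff]; tauto
    · rw [hE]; ext f
      simp only [Set.mem_insert_iff, Set.mem_singleton_iff]; tauto

lemma cycle_edgeSet : (SimpleGraph.cycleGraph 5).edgeSet =
    {s(0,1), s(1,2), s(2,3), s(3,4), s(4,0)} := by
  ext e
  induction e using Sym2.ind with
  | _ x y =>
    simp only [SimpleGraph.mem_edgeSet, Set.mem_insert_iff, Set.mem_singleton_iff]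
    revert x y
    decide

lemma upper_C5 (v : Fin 5) : CapturedIn (SimpleGraph.cycleGraph 5) v 3 := by
  fin_cases v
  · exact cap_cycle (c0:=0) (c1:=1) (c2:=2) (c3:=3) (c4:=4) (by decide) (by decide)
      (by decide) (by decide) (by decide) (by decide) (by decide) (by decide)
      (by decide) (by decide) (by decide)
  · exact cap_cycle (c0:=1) (c1:=2) (c2:=3) (c3:=4) (c4:=0) (by decide) (by decide)
      (by decide) (by decide) (by decide) (by decide) (by decide) (by decide)
      (by decide) (by decide) (by decide)
  · exact cap_cycle (c0:=2) (c1:=3) (c2:=4) (c3:=0) (c4:=1) (by decide) (by decide)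
      (by decide) (by decide) (by decide) (by decide) (by decide) (by decide)
      (by decide) (by decide) (by decide)
  · exact cap_cycle (c0:=3) (c1:=4) (c2:=0) (c3:=1) (c4:=2) (by decide) (by decide)
      (by decide) (by decide) (by decide) (by decide) (by decide) (by decide)
      (by decide) (by decide) (by decide)
  · exact cap_cycle (c0:=4) (c1:=0) (c2:=1) (c3:=2) (c4:=3) (by decide) (by decide)
      (by decide) (by decide) (by decide) (by decide) (by decide) (by decide)
      (by decide) (by decide) (by decide)

lemma lower_C5 : ¬ CapturedIn (SimpleGraph.cycleGraph 5) 0 2 :=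
  low_cycle (by decide) (by decide) (by decide) (by decide) (by decide) (by decide)
    (by decide) (by decide) (by decide) (by decide) cycle_edgeSet

lemma part1 : catNum (SimpleGraph.cycleGraph 5) = 3 := by
  refine le_antisymm (iSup_le fun v => ?_) ?_
  · have hmem : ((3:ℕ):ℕ∞) ∈ Nat.cast '' {m : ℕ | CapturedIn (SimpleGraph.cycleGraph 5) v m} :=
      ⟨3, upper_C5 v, rfl⟩
    exact_mod_cast sInf_le hmem
  · refine le_trans ?_ (le_iSup _ (0 : Fin 5))
    refine le_sInf fun b hb => ?_
    obtain ⟨m, hm, rfl⟩ := hb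
    have h3 : 3 ≤ m := by
      by_contra hcon
      exact lower_C5 (captured_mono hm (by omega))
    exact_mod_cast h3


/-- `cat(C₅) = 3`, and `C₅` plus any additional edge meeting the
cycle has cat number at least 4. -/
theorem catNum_C5 :
    catNum (SimpleGraph.cycleGraph 5) = 3 ∧
    ∀ {V : Type u} (G : SimpleGraph V) (c : V) (p : G.Walk c c),
      p.IsCycle → p.length = 5 →
      ∀ e ∈ G.edgeSet, e ∉ p.edges → (∃ x ∈ p.support, x ∈ e) →
      G.edgeSet = {f | f ∈ p.edges} ∪ {e} →
      4 ≤ catNum G := by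
  refine ⟨part1, ?_⟩
  intro V G c p hcyc hlen e he hnot hex hES
  obtain ⟨u, w, rfl⟩ : ∃ u w, e = s(u,w) := Sym2.ind (fun u w => ⟨u, w, rfl⟩) e
  cases p with
  | nil => simp at hlen
  | cons h1 p => ?_
  rename_i a1
  cases p with
  | nil => simp at hlen
  | cons h2 p => ?_
  rename_i a2
  cases p with
  | nil => simp at hlen
  | cons h3 p => ?_
  rename_i a3
  cases p with
  | nil => simp at hlen
  | cons h4 p => ?_
  rename_i a4
  cases p with
  | nil => simp at hlen
  | cons h5 p => ?_
  rename_i a5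
  cases p with
  | cons h6 p => simp [SimpleGraph.Walk.length_cons] at hlen
  | nil => ?_
  have hnd := hcyc.support_nodup
  simp only [SimpleGraph.Walk.support_cons, SimpleGraph.Walk.support_nil, List.tail_cons,
    List.nodup_cons, List.mem_cons, List.mem_singleton, List.not_mem_nil, or_false,
    List.nodup_nil, and_true] at hnd
  push_neg at hnd
  obtain ⟨⟨n12', n13', n14', n1c⟩, ⟨n23', n24', n2c⟩, ⟨n34', n3c⟩, n4c, -⟩ := hnd
  have hE6 : G.edgeSet = {s(c,a1), s(a1,a2), s(a2,a3), s(a3,a4), s(a4,c), s(u,w)} := by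
    rw [hES]; ext f
    simp only [SimpleGraph.Walk.edges_cons, SimpleGraph.Walk.edges_nil, Set.mem_union,
      Set.mem_setOf_eq, List.mem_cons, List.not_mem_nil, or_false, Set.mem_singleton_iff,
      Set.mem_insert_iff]
    tauto
  have hne5 : s(u,w) ∉ ({s(c,a1), s(a1,a2), s(a2,a3), s(a3,a4), s(a4,c)} : Set (Sym2 V)) := by
    simp only [Set.mem_insert_iff, Set.mem_singleton_iff]
    intro hcon
    apply hnot
    simp only [SimpleGraph.Walk.edges_cons, SimpleGraph.Walk.edges_nil, List.mem_cons,
      List.not_mem_nil, or_false]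
    tauto
  obtain ⟨x, hxs, hxe⟩ := hex
  simp only [SimpleGraph.Walk.support_cons, SimpleGraph.Walk.support_nil, List.mem_cons,
    List.not_mem_nil, or_false, List.mem_singleton] at hxs
  apply catNum_ge_four
  rcases Sym2.mem_iff.mp hxe with h | h
  · rw [h] at hxs
    exact from_cycle_plus_edge (b0 := c) (b1 := a1) (b2 := a2) (b3 := a3) (b4 := a4)
      n1c.symm n2c.symm n3c.symm n4c.symm n12' n13' n14' n23' n24' n34'
      (by tauto) hne5 hE6
  · rw [h] at hxs
    have hsw : s(u,w) = s(w,u) := Sym2.eq_swap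
    rw [hsw] at hne5 hE6
    exact from_cycle_plus_edge (b0 := c) (b1 := a1) (b2 := a2) (b3 := a3) (b4 := a4)
      n1c.symm n2c.symm n3c.symm n4c.symm n12' n13' n14' n23' n24' n34'
      (by tauto) hne5 hE6
end

section
/- If G is an infinite graph that is 2-edge-connected (every pair of vertices is joined by at least 2 edge-disjoint finite paths), then G is cat-win. -/
open SimpleGraph

universe u

section CatAux

variable {V : Type u}

def TCx (K : SimpleGraph V) : Prop :=
  ∀ u w : V, u ∈ K.support → w ∈ K.support → ∀ g : Sym2 V,
    (K.deleteEdges {g}).Reachable u w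

lemma mono_del {K H : SimpleGraph V} (h : K ≤ H) (s : Set (Sym2 V)) :
    K.deleteEdges s ≤ H.deleteEdges s := by
  intro a b hab
  rw [SimpleGraph.deleteEdges_adj] at hab ⊢
  exact ⟨h hab.1, hab.2⟩

lemma support_mono {K H : SimpleGraph V} (h : K ≤ H) : K.support ⊆ H.support := by
  rintro a ⟨b, hab⟩; exact ⟨b, h hab⟩

lemma le_del_of_not_mem {K H : SimpleGraph V} (h : K ≤ H) {e : Sym2 V}
    (he : e ∉ K.edgeSet) : K ≤ H.deleteEdges {e} := by
  intro a b hab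
  rw [SimpleGraph.deleteEdges_adj]
  refine ⟨h hab, ?_⟩
  simp only [Set.mem_singleton_iff]
  rintro rfl
  exact he hab

lemma reachDelete {K : SimpleGraph V} {x y : V}
    (hr : (K.deleteEdges {s(x,y)}).Reachable x y) :
    ∀ {u w : V}, K.Walk u w → (K.deleteEdges {s(x,y)}).Reachable u w := by
  intro u w W
  induction W with
  | nil => exact SimpleGraph.Reachable.refl _
  | @cons a b c h W ih =>
    refine Reachable.trans ?_ ih
    by_cases hq : s(a,b) = s(x,y)
    · rcases Sym2.eq_iff.mp hq with ⟨rfl, rfl⟩ | ⟨rfl, rfl⟩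
      · exact hr
      · exact hr.symm
    · exact SimpleGraph.Adj.reachable
        (by rw [SimpleGraph.deleteEdges_adj]; exact ⟨h, by simpa using hq⟩)

lemma reachAlt {K : SimpleGraph V} {x c : V} :
    ∀ {u w : V}, K.Walk u w →
      (K.deleteEdges {s(x,c)}).Reachable u w ∨
      (((K.deleteEdges {s(x,c)}).Reachable u x ∨ (K.deleteEdges {s(x,c)}).Reachable u c) ∧
       ((K.deleteEdges {s(x,c)}).Reachable x w ∨ (K.deleteEdges {s(x,c)}).Reachable c w)) := by
  intro u w W
  induction W with
  | nil => exact Or.inl (SimpleGraph.Reachable.refl _)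
  | @cons a b cc h W ih =>
    by_cases hq : s(a,b) = s(x,c)
    · refine Or.inr ⟨?_, ?_⟩
      · rcases Sym2.eq_iff.mp hq with ⟨rfl, rfl⟩ | ⟨rfl, rfl⟩
        · exact Or.inl (SimpleGraph.Reachable.refl _)
        · exact Or.inr (SimpleGraph.Reachable.refl _)
      · rcases ih with hl | ⟨_, hw⟩
        · rcases Sym2.eq_iff.mp hq with ⟨rfl, rfl⟩ | ⟨rfl, rfl⟩
          · exact Or.inr hl
          · exact Or.inl hl
        · exact hw
    · have step : (K.deleteEdges {s(x,c)}).Reachable a b :=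
        SimpleGraph.Adj.reachable
          (by rw [SimpleGraph.deleteEdges_adj]; exact ⟨h, by simpa using hq⟩)
      rcases ih with hl | ⟨hu, hw⟩
      · exact Or.inl (step.trans hl)
      · exact Or.inr ⟨Or.imp (step.trans) (step.trans) hu, hw⟩

def Rst (D : SimpleGraph V) (C : Set V) : SimpleGraph V where
  Adj a b := D.Adj a b ∧ a ∈ C ∧ b ∈ C
  symm := ⟨by rintro a b ⟨h, ha, hb⟩; exact ⟨h.symm, hb, ha⟩⟩
  loopless := ⟨by rintro a ⟨h, _, _⟩; exact D.irrefl h⟩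

lemma rst_le (D : SimpleGraph V) (C : Set V) : Rst D C ≤ D := fun _ _ h => h.1

lemma rst_supp_sub_C {D : SimpleGraph V} {C : Set V} : (Rst D C).support ⊆ C := by
  rintro u ⟨d, hd⟩; exact hd.2.1

lemma rst_walk {D : SimpleGraph V} {a : V} :
    ∀ {u w : V}, (W : D.Walk u w) → D.Reachable a u → ∀ g : Sym2 V, g ∉ W.edges →
      ((Rst D {z | D.Reachable a z}).deleteEdges {g}).Reachable u w := by
  intro u w W
  induction W with
  | nil => intro _ _ _; exact SimpleGraph.Reachable.refl _
  | @cons p q r h W ih =>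
    intro hu g hg
    rw [SimpleGraph.Walk.edges_cons, List.mem_cons] at hg
    push_neg at hg
    have hq : D.Reachable a q := hu.trans h.reachable
    refine Reachable.trans ?_ (ih hq g hg.2)
    refine SimpleGraph.Adj.reachable ?_
    rw [SimpleGraph.deleteEdges_adj]
    exact ⟨⟨h, hu, hq⟩, by simpa using fun hh => hg.1 hh.symm⟩

lemma diag_not_mem_edges {K : SimpleGraph V} {x y u : V} (P : K.Walk x y) :
    s(u,u) ∉ P.edges := fun hm =>
  K.irrefl (K.mem_edgeSet.mp (P.edges_subset_edgeSet hm))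

lemma main2lem {K : SimpleGraph V} {x c a : V}
    (hnotxc : ¬ (K.deleteEdges {s(x,c)}).Reachable x c)
    (ha : a = x ∨ a = c) {u w : V}
    (hu : (K.deleteEdges {s(x,c)}).Reachable a u)
    (hw : (K.deleteEdges {s(x,c)}).Reachable a w)
    {g : Sym2 V} (hr : (K.deleteEdges {g}).Reachable u w) :
    ((Rst (K.deleteEdges {s(x,c)}) {z | (K.deleteEdges {s(x,c)}).Reachable a z}).deleteEdges
      {g}).Reachable u w := by
  obtain ⟨W₁⟩ := hr
  have hmono : (K.deleteEdges {g}).deleteEdges {s(x,c)} ≤ K.deleteEdges {s(x,c)} :=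
    mono_del (deleteEdges_le _) _
  have key : ((K.deleteEdges {g}).deleteEdges {s(x,c)}).Reachable u w := by
    rcases reachAlt (x := x) (c := c) W₁ with hl | ⟨hup, hwp⟩
    · exact hl
    · have hua : ((K.deleteEdges {g}).deleteEdges {s(x,c)}).Reachable u a := by
        rcases ha with rfl | rfl
        · rcases hup with h1 | h2
          · exact h1
          · exact absurd (hu.trans (h2.mono hmono)) hnotxc
        · rcases hup with h1 | h2
          · exact absurd ((hu.trans (h1.mono hmono)).symm) hnotxc
          · exact h2
      have haw : ((K.deleteEdges {g}).deleteEdges {s(x,c)}).Reachable a w := by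
        rcases ha with rfl | rfl
        · rcases hwp with h1 | h2
          · exact h1
          · exact absurd (hw.trans (h2.mono hmono).symm) hnotxc
        · rcases hwp with h1 | h2
          · exact absurd ((h1.mono hmono).trans hw.symm) hnotxc
          · exact h2
      exact hua.trans haw
  obtain ⟨W₂⟩ := key
  have hedges : ∀ e ∈ W₂.edges, e ∈ (K.deleteEdges {s(x,c)}).edgeSet := fun e he =>
    (SimpleGraph.edgeSet_mono hmono) (W₂.edges_subset_edgeSet he)
  have hgW : g ∉ (W₂.transfer _ hedges).edges := by
    rw [SimpleGraph.Walk.edges_transfer]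
    intro hm
    have h1 := W₂.edges_subset_edgeSet hm
    rw [SimpleGraph.edgeSet_deleteEdges, SimpleGraph.edgeSet_deleteEdges] at h1
    exact h1.1.2 rfl
  exact rst_walk (W₂.transfer _ hedges) hu g hgW

lemma side2lem {D : SimpleGraph V} {a u w : V}
    (hu : D.Reachable a u) (hw : D.Reachable a w) {g : Sym2 V}
    (hg : g ∉ (Rst D {z | D.Reachable a z}).edgeSet) :
    ((Rst D {z | D.Reachable a z}).deleteEdges {g}).Reachable u w := by
  obtain ⟨Wu⟩ := hu.symm
  obtain ⟨Wa⟩ := hw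
  have r1 : (Rst D {z | D.Reachable a z}).Reachable u a :=
    (rst_walk Wu hu s(u,u) (diag_not_mem_edges Wu)).mono (deleteEdges_le _)
  have r2 : (Rst D {z | D.Reachable a z}).Reachable a w :=
    (rst_walk Wa (Reachable.refl a) s(a,a) (diag_not_mem_edges Wa)).mono (deleteEdges_le _)
  obtain ⟨W⟩ := r1.trans r2
  refine ⟨W.toDeleteEdges {g} fun e he => ?_⟩
  simp only [Set.mem_singleton_iff]
  rintro rfl
  exact hg (W.edges_subset_edgeSet he)

lemma rst_supp_large {K : SimpleGraph V} {x c a : V} :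
    (({z | (K.deleteEdges {s(x,c)}).Reachable a z} ∩ K.support) \ {x, c}) ⊆
      (Rst (K.deleteEdges {s(x,c)}) {z | (K.deleteEdges {s(x,c)}).Reachable a z}).support := by
  rintro u ⟨⟨hC, d, hd⟩, hne⟩
  simp only [Set.mem_insert_iff, Set.mem_singleton_iff, not_or] at hne
  have hne' : s(u,d) ≠ s(x,c) := by
    intro hq
    rcases Sym2.eq_iff.mp hq with ⟨rfl, _⟩ | ⟨rfl, _⟩
    · exact hne.1 rfl
    · exact hne.2 rfl
  have hDadj : (K.deleteEdges {s(x,c)}).Adj u d := by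
    rw [SimpleGraph.deleteEdges_adj]
    exact ⟨hd, by simpa using hne'⟩
  exact ⟨d, hDadj, hC, hC.trans hDadj.reachable⟩

lemma lemN : ∀ (n : ℕ) (K : SimpleGraph V) (x y : V) (P : K.Walk x y),
    P.length ≤ n → P.IsPath → K.support.Infinite →
    (∀ u w, u ∈ K.support → w ∈ K.support → ∀ g, g ∉ P.edges →
      (K.deleteEdges {g}).Reachable u w) →
    ∃ K', K' ≤ K ∧ K'.support.Infinite ∧ TCx K' := by
  classical
  intro n
  induction n with
  | zero =>
    intro K x y P hlen hP hinf hyp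
    cases P with
    | nil => exact ⟨K, le_refl _, hinf, fun u w hu hw g => hyp u w hu hw g (by simp)⟩
    | cons h P' => simp at hlen
  | succ m ih =>
    intro K x y P hlen hP hinf hyp
    cases P with
    | nil => exact ⟨K, le_refl _, hinf, fun u w hu hw g => hyp u w hu hw g (by simp)⟩
    | @cons _ c _ h P' =>
      have hg0notP' : s(x, c) ∉ P'.edges := by
        have hnd := hP.edges_nodup
        rw [SimpleGraph.Walk.edges_cons] at hnd
        exact (List.nodup_cons.mp hnd).1
      have hP'path : P'.IsPath := hP.of_cons
      have hlen' : P'.length ≤ m := by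
        simpa using Nat.le_of_succ_le_succ (by simpa using hlen)
      by_cases hcase : ∀ u w, u ∈ K.support → w ∈ K.support →
          (K.deleteEdges {s(x,c)}).Reachable u w
      · -- the first edge is harmless; recurse on same graph
        refine ih K c y P' hlen' hP'path hinf ?_
        intro u w hu hw g hg
        by_cases hgg : g = s(x,c)
        · subst hgg; exact hcase u w hu hw
        · refine hyp u w hu hw g ?_
          rw [SimpleGraph.Walk.edges_cons, List.mem_cons]
          push_neg
          exact ⟨hgg, hg⟩
      · push_neg at hcase
        obtain ⟨u₀, w₀, hu₀, hw₀, hnr⟩ := hcase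
        have hKreach : ∀ u w, u ∈ K.support → w ∈ K.support → K.Reachable u w := by
          intro u w hu hw
          exact (hyp u w hu hw s(u,u) (diag_not_mem_edges _)).mono (deleteEdges_le _)
        have hxs : x ∈ K.support := ⟨c, h⟩
        have hcs : c ∈ K.support := ⟨x, h.symm⟩
        have hnotxc : ¬ (K.deleteEdges {s(x,c)}).Reachable x c := by
          intro hr
          obtain ⟨W⟩ := hKreach u₀ w₀ hu₀ hw₀
          exact hnr (reachDelete hr W)
        have hcover : ∀ u ∈ K.support,
            (K.deleteEdges {s(x,c)}).Reachable x u ∨ (K.deleteEdges {s(x,c)}).Reachable c u := by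
          intro u hu
          obtain ⟨W⟩ := hKreach u x hu hxs
          rcases reachAlt (x := x) (c := c) W with hl | ⟨hup, _⟩
          · exact Or.inl hl.symm
          · exact hup.imp Reachable.symm Reachable.symm
        have hP'edges : ∀ e ∈ P'.edges, e ∈ (K.deleteEdges {s(x,c)}).edgeSet := by
          intro e he
          rw [SimpleGraph.edgeSet_deleteEdges]
          refine ⟨P'.edges_subset_edgeSet he, ?_⟩
          simp only [Set.mem_singleton_iff]
          rintro rfl
          exact hg0notP' he
        set D := K.deleteEdges {s(x,c)} with hD
        let P'' : D.Walk c y := P'.transfer D hP'edges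
        have hP''edges : P''.edges = P'.edges := SimpleGraph.Walk.edges_transfer P' hP'edges
        have hP''supp : ∀ z ∈ P''.support, D.Reachable c z := by
          intro z hz
          exact ⟨P''.takeUntil z hz⟩
        by_cases hinf2 : ({z | D.Reachable c z} ∩ K.support).Infinite
        · -- anchor c : recurse inside K₂
          set C := {z | D.Reachable c z} with hC
          set K₂ := Rst D C with hK₂
          have hsupp₂ : K₂.support.Infinite :=
            (hinf2.diff (Set.toFinite {x, c})).mono rst_supp_large
          have hsuppC : K₂.support ⊆ C := rst_supp_sub_C
          have hsuppK : K₂.support ⊆ K.support :=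
            (_root_.support_mono (rst_le _ _)).trans (_root_.support_mono (deleteEdges_le _))
          have hP''K₂ : ∀ e ∈ P''.edges, e ∈ K₂.edgeSet := by
            intro e he
            revert he
            induction e using Sym2.ind with
            | _ d₁ d₂ =>
              intro he
              have had : D.Adj d₁ d₂ := D.mem_edgeSet.mp (P''.edges_subset_edgeSet he)
              have h1 : d₁ ∈ P''.support := SimpleGraph.Walk.fst_mem_support_of_mem_edges _ he
              have h2 : d₂ ∈ P''.support := SimpleGraph.Walk.snd_mem_support_of_mem_edges _ he
              exact K₂.mem_edgeSet.mpr ⟨had, hP''supp _ h1, hP''supp _ h2⟩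
          let P₂ : K₂.Walk c y := P''.transfer K₂ hP''K₂
          have hP₂edges : P₂.edges = P'.edges := by
            show (P''.transfer K₂ hP''K₂).edges = P'.edges
            rw [SimpleGraph.Walk.edges_transfer]
            exact hP''edges
          have hP₂len : P₂.length ≤ m := by
            have h1 : P₂.edges.length = P₂.length := SimpleGraph.Walk.length_edges _
            have h2 : P'.edges.length = P'.length := SimpleGraph.Walk.length_edges _
            rw [hP₂edges] at h1
            omega
          have hP₂path : P₂.IsPath := by
            rw [SimpleGraph.Walk.isPath_def]
            show (P''.transfer K₂ hP''K₂).support.Nodup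
            rw [SimpleGraph.Walk.support_transfer]
            show (P'.transfer D hP'edges).support.Nodup
            rw [SimpleGraph.Walk.support_transfer]
            exact (SimpleGraph.Walk.isPath_def _).mp hP'path
          have hyp₂ : ∀ u w, u ∈ K₂.support → w ∈ K₂.support → ∀ g, g ∉ P₂.edges →
              (K₂.deleteEdges {g}).Reachable u w := by
            intro u w hu hw g hg
            rw [hP₂edges] at hg
            by_cases hgP : g ∈ (SimpleGraph.Walk.cons h P').edges
            · have hgeq : g = s(x,c) := by
                rw [SimpleGraph.Walk.edges_cons, List.mem_cons] at hgP
                tauto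
              refine side2lem (hsuppC hu) (hsuppC hw) ?_
              rw [hgeq]
              intro hm
              have hmm := SimpleGraph.edgeSet_mono (rst_le D C) hm
              rw [hD, SimpleGraph.edgeSet_deleteEdges] at hmm
              exact hmm.2 rfl
            · exact main2lem hnotxc (Or.inr rfl) (hsuppC hu) (hsuppC hw)
                (hyp u w (hsuppK hu) (hsuppK hw) g hgP)
          obtain ⟨K', hK'le, hK'inf, hK'TC⟩ := ih K₂ c y P₂ hP₂len hP₂path hsupp₂ hyp₂
          exact ⟨K', hK'le.trans ((rst_le _ _).trans (deleteEdges_le _)), hK'inf, hK'TC⟩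
        · -- anchor x : K₂ itself already works
          have hinf1 : ({z | D.Reachable x z} ∩ K.support).Infinite := by
            rw [Set.not_infinite] at hinf2
            by_contra h1
            rw [Set.not_infinite] at h1
            refine hinf (Set.Finite.subset (h1.union hinf2) ?_)
            intro u hu
            rcases hcover u hu with hx | hc
            · exact Or.inl ⟨hx, hu⟩
            · exact Or.inr ⟨hc, hu⟩
          set C := {z | D.Reachable x z} with hC
          set K₂ := Rst D C with hK₂
          have hsupp₂ : K₂.support.Infinite :=
            (hinf1.diff (Set.toFinite {x, c})).mono rst_supp_large
          have hsuppC : K₂.support ⊆ C := rst_supp_sub_C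
          have hsuppK : K₂.support ⊆ K.support :=
            (_root_.support_mono (rst_le _ _)).trans (_root_.support_mono (deleteEdges_le _))
          refine ⟨K₂, (rst_le _ _).trans (deleteEdges_le _), hsupp₂, ?_⟩
          intro u w hu hw g
          induction g using Sym2.ind with
          | _ d₁ d₂ =>
            by_cases hgP : s(d₁,d₂) ∈ (SimpleGraph.Walk.cons h P').edges
            · refine side2lem (hsuppC hu) (hsuppC hw) ?_
              intro hm
              rw [SimpleGraph.Walk.edges_cons, List.mem_cons] at hgP
              rcases hgP with heq | hgP'
              · rw [heq] at hm
                have hmm := SimpleGraph.edgeSet_mono (rst_le D C) hm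
                rw [hD, SimpleGraph.edgeSet_deleteEdges] at hmm
                exact hmm.2 rfl
              · have h1 : d₁ ∈ P''.support :=
                  SimpleGraph.Walk.fst_mem_support_of_mem_edges P''
                    (by rw [hP''edges]; exact hgP')
                have hd₁C : d₁ ∈ C := (K₂.mem_edgeSet.mp hm).2.1
                exact hnotxc (hd₁C.trans (hP''supp _ h1).symm)
            · exact main2lem hnotxc (Or.inl rfl) (hsuppC hu) (hsuppC hw)
                (hyp u w (hsuppK hu) (hsuppK hw) _ hgP)

lemma step2EC {K : SimpleGraph V} (hTC : TCx K) (hinf : K.support.Infinite)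
    {x y : V} (hxy : K.Adj x y) :
    ∃ K', K' ≤ K.deleteEdges {s(x,y)} ∧ K'.support.Infinite ∧ TCx K' := by
  classical
  have hxs : x ∈ K.support := ⟨y, hxy⟩
  have hys : y ∈ K.support := ⟨x, hxy.symm⟩
  obtain ⟨p₀⟩ := hTC x y hxs hys s(x,y)
  have hPpath : p₀.bypass.IsPath := p₀.bypass_isPath
  have hsub : K.support \ {x, y} ⊆ (K.deleteEdges {s(x,y)}).support := by
    rintro u ⟨⟨d, hd⟩, hne⟩
    simp only [Set.mem_insert_iff, Set.mem_singleton_iff, not_or] at hne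
    refine ⟨d, ?_⟩
    show (K.deleteEdges {s(x,y)}).Adj u d
    rw [SimpleGraph.deleteEdges_adj]
    refine ⟨hd, ?_⟩
    simp only [Set.mem_singleton_iff]
    intro hq
    rcases Sym2.eq_iff.mp hq with ⟨rfl, _⟩ | ⟨rfl, _⟩
    · exact hne.1 rfl
    · exact hne.2 rfl
  have hinfH : (K.deleteEdges {s(x,y)}).support.Infinite :=
    (hinf.diff (Set.toFinite {x, y})).mono hsub
  refine lemN p₀.bypass.length (K.deleteEdges {s(x,y)}) x y p₀.bypass le_rfl hPpath hinfH ?_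
  intro u w hu hw g hg
  have huK : u ∈ K.support := _root_.support_mono (deleteEdges_le _) hu
  have hwK : w ∈ K.support := _root_.support_mono (deleteEdges_le _) hw
  obtain ⟨W⟩ := hTC u w huK hwK g
  have hPedges : ∀ e ∈ p₀.bypass.edges,
      e ∈ ((K.deleteEdges {g}).deleteEdges {s(x,y)}).edgeSet := by
    intro e he
    have h1 := p₀.bypass.edges_subset_edgeSet he
    rw [SimpleGraph.edgeSet_deleteEdges] at h1
    rw [SimpleGraph.edgeSet_deleteEdges, SimpleGraph.edgeSet_deleteEdges]
    refine ⟨⟨h1.1, ?_⟩, h1.2⟩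
    simp only [Set.mem_singleton_iff]
    rintro rfl
    exact hg he
  have hr : ((K.deleteEdges {g}).deleteEdges {s(x,y)}).Reachable x y :=
    ⟨p₀.bypass.transfer _ hPedges⟩
  have hres := reachDelete hr W
  refine hres.mono ?_
  intro a b hab
  rw [SimpleGraph.deleteEdges_adj, SimpleGraph.deleteEdges_adj] at hab
  rw [SimpleGraph.deleteEdges_adj, SimpleGraph.deleteEdges_adj]
  tauto


end CatAux

/-- an infinite 2-edge-connected graph is cat-win. -/
theorem twoEdgeConnected_catWin {V : Type u} [Infinite V] (G : SimpleGraph V)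
    (h : TwoEdgeConnected G) : CatWin G := by
  unfold CatWin CatWinFrom CatMove
  classical
  have hTCG : TCx G := by
    intro u w _ _ g
    by_cases huw : u = w
    · subst huw; exact Reachable.refl _
    · obtain ⟨p, q, _, _, hdisj⟩ := h u w huw
      by_cases hgp : g ∈ p.edges
      · refine ⟨q.toDeleteEdges {g} fun e he => ?_⟩
        simp only [Set.mem_singleton_iff]
        intro hEq
        exact hdisj g hgp (hEq ▸ he)
      · refine ⟨p.toDeleteEdges {g} fun e he => ?_⟩
        simp only [Set.mem_singleton_iff]
        intro hEq
        exact hgp (hEq ▸ he)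
  have hsuppG : G.support = Set.univ := by
    refine Set.eq_univ_of_forall fun x => ?_
    obtain ⟨z, hz⟩ := exists_ne x
    obtain ⟨p, q, _, _, _⟩ := h x z (Ne.symm hz)
    cases p with
    | nil => exact absurd rfl (Ne.symm hz)
    | cons hadj _ => exact ⟨_, hadj⟩
  have hinfG : G.support.Infinite := by
    rw [hsuppG]; exact Set.infinite_univ
  obtain ⟨v, hv⟩ : ∃ v, v ∈ G.support := hinfG.nonempty
  refine ⟨v, {p | ∃ K : SimpleGraph V, K ≤ p.1 ∧ K.support.Infinite ∧ p.2 ∈ K.support ∧ TCx K},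
    ⟨G, le_refl _, hinfG, hv, hTCG⟩, ?_⟩
  rintro p ⟨K, hKle, hKinf, hp2, hKTC⟩
  constructor
  · obtain ⟨w, hw⟩ := hp2
    exact ⟨w, hKle hw⟩
  · intro e he
    by_cases heK : e ∈ K.edgeSet
    · revert heK
      induction e using Sym2.ind with
      | _ a b =>
        intro heK
        obtain ⟨K', hK'le, hK'inf, hK'TC⟩ := step2EC hKTC hKinf (K.mem_edgeSet.mp heK)
        obtain ⟨w, hwK', hwne⟩ : ∃ w ∈ K'.support, w ≠ p.2 := by
          obtain ⟨w, hw⟩ := (hK'inf.diff (Set.finite_singleton p.2)).nonempty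
          exact ⟨w, hw.1, hw.2⟩
        have hwK : w ∈ K.support :=
          _root_.support_mono (hK'le.trans (deleteEdges_le _)) hwK'
        have hreach : (K.deleteEdges {s(a,b)}).Reachable p.2 w := hKTC p.2 w hp2 hwK s(a,b)
        refine ⟨w, ⟨hwne.symm, hreach.mono (mono_del hKle _)⟩,
          K', hK'le.trans (mono_del hKle _), hK'inf, hwK', hK'TC⟩
    · obtain ⟨w, hw⟩ := hp2
      refine ⟨w, ⟨hw.ne, SimpleGraph.Adj.reachable ?_⟩,
        K, le_del_of_not_mem hKle heK, hKinf, ⟨p.2, hw.symm⟩, hKTC⟩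
      rw [SimpleGraph.deleteEdges_adj]
      refine ⟨hKle hw, ?_⟩
      simp only [Set.mem_singleton_iff]
      rintro rfl
      exact heK hw
end
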